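/- arXiv:1401.7428 — 6 statements merged into one kernel-verified Lean document; each statement's English description precedes it below -/
import Mathlib

section
/- Let X be a real Banach space and let A : X ⇉ X* be ultramaximally monotone. Then the following four sets are equal: int(ran A), int(conv(ran A)), int(P_{X*}(dom F_A)), and int(P_{X*}(dom Φ_A)), where P_{X*} denotes the projection of X × X* (respectively X** × X*) onto the X* coordinate. -/
open Pointwise Set NormedSpace

variable {X : Type*} [NormedAddCommGroup X] [NormedSpace ℝ X]

/-- A set-valued operator `A : X ⇉ X*`, identified with its graph, is monotone. -/
def IsMonotoneOp (A : Set (X × StrongDual ℝ X)) : Prop :=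
  ∀ p ∈ A, ∀ q ∈ A, 0 ≤ (p.2 - q.2) (p.1 - q.1)

/-- `A` is maximally monotone: monotone and every monotonically related pair belongs to it. -/
def IsMaxMonotone (A : Set (X × StrongDual ℝ X)) : Prop :=
  IsMonotoneOp A ∧
    ∀ (x : X) (xs : StrongDual ℝ X), (∀ p ∈ A, 0 ≤ (xs - p.2) (x - p.1)) → (x, xs) ∈ A

/-- `A` is ultramaximally monotone: monotone, and maximally monotone with respect to
`X** × X*`. -/
def IsUltraMaxMonotone (A : Set (X × StrongDual ℝ X)) : Prop :=
  IsMonotoneOp A ∧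
    ∀ (xss : StrongDual ℝ (StrongDual ℝ X)) (xs : StrongDual ℝ X),
      (∀ p ∈ A, 0 ≤ (xss - inclusionInDoubleDual ℝ X p.1) (xs - p.2)) →
      ∃ x : X, xss = inclusionInDoubleDual ℝ X x ∧ (x, xs) ∈ A

/-- `A` is maximally monotone of type (NI): for every `(x**, x*)`,
`inf_{(a,a*) ∈ gra A} ⟨x* − a*, x** − â⟩ ≤ 0`. -/
def IsTypeNI (A : Set (X × StrongDual ℝ X)) : Prop :=
  IsMaxMonotone A ∧
    ∀ (xss : StrongDual ℝ (StrongDual ℝ X)) (xs : StrongDual ℝ X) (ε : ℝ), 0 < ε →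
      ∃ p ∈ A, (xss - inclusionInDoubleDual ℝ X p.1) (xs - p.2) < ε

def domOp (A : Set (X × StrongDual ℝ X)) : Set X := {x | ∃ xs, (x, xs) ∈ A}

def ranOp (A : Set (X × StrongDual ℝ X)) : Set (StrongDual ℝ X) := {xs | ∃ x, (x, xs) ∈ A}

/-- The sum `A + B`: `gra (A+B) = {(x, a* + b*) : (x,a*) ∈ gra A, (x,b*) ∈ gra B}`. -/
def sumOp (A B : Set (X × StrongDual ℝ X)) : Set (X × StrongDual ℝ X) :=
  {p | ∃ as bs, (p.1, as) ∈ A ∧ (p.1, bs) ∈ B ∧ p.2 = as + bs}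

/-- The Fitzpatrick function `F_A(x, x*) = sup_{(a,a*) ∈ gra A} (⟨x,a*⟩ + ⟨a,x*⟩ − ⟨a,a*⟩)`. -/
noncomputable def fitz (A : Set (X × StrongDual ℝ X)) : X × StrongDual ℝ X → EReal :=
  fun q => ⨆ p : A, ((p.1.2 q.1 + q.2 p.1.1 - p.1.2 p.1.1 : ℝ) : EReal)

/-- The extended Fitzpatrick function
`Φ_A(x**, x*) = sup_{(a,a*) ∈ gra A} (⟨a*,x**⟩ + ⟨a,x*⟩ − ⟨a,a*⟩)` on `X** × X*`. -/
noncomputable def phiFitz (A : Set (X × StrongDual ℝ X)) : StrongDual ℝ (StrongDual ℝ X) × StrongDual ℝ X → EReal :=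
  fun q => ⨆ p : A, ((q.1 p.1.2 + q.2 p.1.1 - p.1.2 p.1.1 : ℝ) : EReal)

/-- The Fenchel conjugate of the Fitzpatrick function,
`F_A*(x*, x**) = sup_{(y,y*)} (⟨y,x*⟩ + ⟨y*,x**⟩ − F_A(y,y*))`. -/
noncomputable def fitzConj (A : Set (X × StrongDual ℝ X)) :
    StrongDual ℝ X × StrongDual ℝ (StrongDual ℝ X) → EReal :=
  fun r => ⨆ q : X × StrongDual ℝ X, (((r.1 q.1 + r.2 q.2 : ℝ) : EReal) - fitz A q)


/-- `A` is maximally monotone of type (FPV). -/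
def IsFPV (A : Set (X × StrongDual ℝ X)) : Prop :=
  IsMaxMonotone A ∧
    ∀ U : Set X, IsOpen U → Convex ℝ U → (U ∩ domOp A).Nonempty →
      ∀ x ∈ U, ∀ xs : StrongDual ℝ X,
        (∀ p ∈ A, p.1 ∈ U → 0 ≤ (xs - p.2) (x - p.1)) → (x, xs) ∈ A

/-- `A` is rectangular: `dom A × ran A ⊆ dom F_A`. -/
def IsRectangular (A : Set (X × StrongDual ℝ X)) : Prop :=
  (domOp A) ×ˢ (ranOp A) ⊆ {q : X × StrongDual ℝ X | fitz A q < ⊤}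

/-- The graph of the duality map `J x = {x* : ⟨x,x*⟩ = ‖x‖² and ‖x*‖ = ‖x‖}`. -/
def dualityMapGraph : Set (X × StrongDual ℝ X) :=
  {p | p.2 p.1 = ‖p.1‖ ^ 2 ∧ ‖p.2‖ = ‖p.1‖}

/-- The partial inf-convolution `(F₁ □₂ F₂)(x, x*) = inf_{v*} (F₁(x, x* − v*) + F₂(x, v*))`. -/
noncomputable def infConv2 (F1 F2 : X × StrongDual ℝ X → EReal) : X × StrongDual ℝ X → EReal :=
  fun q => ⨅ v : StrongDual ℝ X, (F1 (q.1, q.2 - v) + F2 (q.1, v))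



section UMMAux

set_option maxHeartbeats 1000000
set_option synthInstance.maxHeartbeats 400000

open Filter Topology

lemma ereal_iSup_lt_top_iff {ι : Sort*} (f : ι → ℝ) :
    (⨆ i, ((f i : ℝ) : EReal)) < ⊤ ↔ ∃ M : ℝ, ∀ i, f i ≤ M := by
  constructor
  · intro h
    by_contra hc
    push_neg at hc
    have : (⨆ i, ((f i : ℝ) : EReal)) = ⊤ := by
      rw [iSup_eq_top]
      intro b hb
      induction b with
      | bot => obtain ⟨i, _⟩ := hc 0; exact ⟨i, EReal.bot_lt_coe _⟩
      | coe b =>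
        obtain ⟨i, hi⟩ := hc b
        exact ⟨i, by exact_mod_cast hi⟩
      | top => exact absurd hb (lt_irrefl _)
    rw [this] at h; exact absurd h (lt_irrefl _)
  · rintro ⟨M, hM⟩
    refine lt_of_le_of_lt (iSup_le fun i => ?_) (EReal.coe_lt_top M)
    exact_mod_cast hM i

noncomputable def comboW (xs : StrongDual ℝ X) (l : (X × StrongDual ℝ X) →₀ ℝ) : StrongDual ℝ X :=
  l.sum fun p v => v • (p.2 - xs)

noncomputable def comboS (xs : StrongDual ℝ X) (l : (X × StrongDual ℝ X) →₀ ℝ) : ℝ :=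
  l.sum fun p v => v * ((p.2 - xs) p.1)

noncomputable def comboA (l : (X × StrongDual ℝ X) →₀ ℝ) : X := l.sum fun p v => v • p.1


lemma combo_mono (A : Set (X × StrongDual ℝ X)) (hmono : IsMonotoneOp A) (xs : StrongDual ℝ X)
    (l : (X × StrongDual ℝ X) →₀ ℝ) (hpos : ∀ p, 0 ≤ l p) (hsupp : ↑l.support ⊆ A) :
    comboW xs l (comboA l) ≤ (l.sum fun _ v => v) * comboS xs l := by
  classical
  set s := l.support with hs
  have hW : comboW xs l (comboA l)
      = ∑ p ∈ s, ∑ q ∈ s, l p * l q * ((p.2 - xs) q.1) := by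
    simp only [comboW, comboA, Finsupp.sum, map_sum, ContinuousLinearMap.sum_apply,
      ContinuousLinearMap.smul_apply, map_smul, smul_eq_mul, Finset.mul_sum]
    rw [Finset.sum_comm]
    apply Finset.sum_congr rfl; intro p _
    apply Finset.sum_congr rfl; intro q _
    ring
  have hT : (l.sum fun _ v => v) * comboS xs l
      = ∑ p ∈ s, ∑ q ∈ s, l p * l q * ((q.2 - xs) q.1) := by
    simp only [comboS, Finsupp.sum, Finset.sum_mul_sum]
    apply Finset.sum_congr rfl; intro p _
    apply Finset.sum_congr rfl; intro q _
    ring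
  have hD : 0 ≤ ∑ p ∈ s, ∑ q ∈ s, l p * l q * ((p.2 - q.2) (p.1 - q.1)) := by
    apply Finset.sum_nonneg; intro p hp
    apply Finset.sum_nonneg; intro q hq
    exact mul_nonneg (mul_nonneg (hpos p) (hpos q)) (hmono p (hsupp hp) q (hsupp hq))
  have hD2 : ∑ p ∈ s, ∑ q ∈ s, l p * l q * ((p.2 - q.2) (p.1 - q.1))
      = ((∑ p ∈ s, ∑ q ∈ s, l p * l q * ((p.2 - xs) p.1))
        + (∑ p ∈ s, ∑ q ∈ s, l p * l q * ((q.2 - xs) q.1)))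
        - ((∑ p ∈ s, ∑ q ∈ s, l p * l q * ((p.2 - xs) q.1))
        + (∑ p ∈ s, ∑ q ∈ s, l p * l q * ((q.2 - xs) p.1))) := by
    simp only [← Finset.sum_add_distrib, ← Finset.sum_sub_distrib]
    refine Finset.sum_congr rfl fun p _ => Finset.sum_congr rfl fun q _ => ?_
    simp only [ContinuousLinearMap.sub_apply, map_sub]
    ring
  have h1 : ∑ p ∈ s, ∑ q ∈ s, l p * l q * ((q.2 - xs) q.1)
      = ∑ p ∈ s, ∑ q ∈ s, l p * l q * ((p.2 - xs) p.1) := by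
    rw [Finset.sum_comm]
    refine Finset.sum_congr rfl fun p _ => Finset.sum_congr rfl fun q _ => by ring
  have h2 : ∑ p ∈ s, ∑ q ∈ s, l p * l q * ((p.2 - xs) q.1)
      = ∑ p ∈ s, ∑ q ∈ s, l p * l q * ((q.2 - xs) p.1) := by
    rw [Finset.sum_comm]
    refine Finset.sum_congr rfl fun p _ => Finset.sum_congr rfl fun q _ => by ring
  rw [hW, hT]
  linarith [hD, hD2, h1, h2]


lemma comboW_add (xs : StrongDual ℝ X) (l₁ l₂ : (X × StrongDual ℝ X) →₀ ℝ) :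
    comboW xs (l₁ + l₂) = comboW xs l₁ + comboW xs l₂ :=
  Finsupp.sum_add_index' (fun p => zero_smul ℝ _) (fun p b₁ b₂ => add_smul b₁ b₂ _)

lemma comboS_add (xs : StrongDual ℝ X) (l₁ l₂ : (X × StrongDual ℝ X) →₀ ℝ) :
    comboS xs (l₁ + l₂) = comboS xs l₁ + comboS xs l₂ :=
  Finsupp.sum_add_index' (fun p => zero_mul _) (fun p b₁ b₂ => add_mul b₁ b₂ _)

lemma comboW_smul (xs : StrongDual ℝ X) (c : ℝ) (l : (X × StrongDual ℝ X) →₀ ℝ) :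
    comboW xs (c • l) = c • comboW xs l := by
  unfold comboW
  rw [Finsupp.sum_smul_index, Finsupp.smul_sum]
  · exact Finsupp.sum_congr fun p _ => mul_smul c (l p) _
  · intro i; exact zero_smul ℝ _

lemma comboS_smul (xs : StrongDual ℝ X) (c : ℝ) (l : (X × StrongDual ℝ X) →₀ ℝ) :
    comboS xs (c • l) = c * comboS xs l := by
  unfold comboS
  rw [Finsupp.sum_smul_index, Finsupp.mul_sum]
  · exact Finsupp.sum_congr fun p _ => mul_assoc c (l p) _
  · intro i; exact zero_mul _

lemma comboT_smul (c : ℝ) (l : (X × StrongDual ℝ X) →₀ ℝ) :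
    ((c • l).sum fun _ v => v) = c * (l.sum fun _ v => v) := by
  rw [Finsupp.sum_smul_index, Finsupp.mul_sum]
  intro i; rfl

lemma comboW_zero (xs : StrongDual ℝ X) : comboW xs 0 = 0 := Finsupp.sum_zero_index

lemma comboS_zero (xs : StrongDual ℝ X) : comboS xs 0 = 0 := Finsupp.sum_zero_index

lemma comboW_single (xs : StrongDual ℝ X) (p : X × StrongDual ℝ X) :
    comboW xs (Finsupp.single p 1) = p.2 - xs := by
  unfold comboW
  rw [Finsupp.sum_single_index, one_smul]
  exact zero_smul ℝ _

lemma comboS_single (xs : StrongDual ℝ X) (p : X × StrongDual ℝ X) :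
    comboS xs (Finsupp.single p 1) = (p.2 - xs) p.1 := by
  unfold comboS
  rw [Finsupp.sum_single_index, one_mul]
  exact zero_mul _


lemma closure_witness (A : Set (X × StrongDual ℝ X)) (n : ℝ) (ys : StrongDual ℝ X)
    (hys : ys ∈ closure {v : StrongDual ℝ X |
      ∃ yss : StrongDual ℝ (StrongDual ℝ X), ‖yss‖ ≤ n ∧ ∀ p ∈ A, yss p.2 + v p.1 - p.2 p.1 ≤ n}) :
    ∃ yss : StrongDual ℝ (StrongDual ℝ X), ‖yss‖ ≤ n ∧ ∀ p ∈ A, yss p.2 + ys p.1 - p.2 p.1 ≤ n := by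
  classical
  set En : Set (StrongDual ℝ X) := {v : StrongDual ℝ X |
    ∃ yss : StrongDual ℝ (StrongDual ℝ X), ‖yss‖ ≤ n ∧ ∀ p ∈ A, yss p.2 + v p.1 - p.2 p.1 ≤ n} with hEn
  set g : StrongDual ℝ X → StrongDual ℝ (StrongDual ℝ X) := fun v =>
    if h : ∃ yss : StrongDual ℝ (StrongDual ℝ X), ‖yss‖ ≤ n ∧ ∀ p ∈ A, yss p.2 + v p.1 - p.2 p.1 ≤ n
    then h.choose else 0 with hg
  have hgspec : ∀ v ∈ En, ‖g v‖ ≤ n ∧ ∀ p ∈ A, (g v) p.2 + v p.1 - p.2 p.1 ≤ n := by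
    intro v hv
    have hv' : ∃ yss : StrongDual ℝ (StrongDual ℝ X), ‖yss‖ ≤ n ∧ ∀ p ∈ A, yss p.2 + v p.1 - p.2 p.1 ≤ n := hv
    simp only [hg]
    rw [dif_pos hv']
    exact hv'.choose_spec
  haveI hne : (𝓝[En] ys).NeBot := mem_closure_iff_nhdsWithin_neBot.1 hys
  set F : Filter (WeakDual ℝ (StrongDual ℝ X)) :=
    Filter.map (fun v => (StrongDual.toWeakDual (g v))) (𝓝[En] ys) with hF
  have hK : IsCompact (WeakDual.toStrongDual ⁻¹' Metric.closedBall 0 n) :=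
    WeakDual.isCompact_closedBall (0 : StrongDual ℝ (StrongDual ℝ X)) n
  have hFK : F ≤ Filter.principal (WeakDual.toStrongDual ⁻¹' Metric.closedBall 0 n) := by
    rw [Filter.le_principal_iff, hF, Filter.mem_map]
    refine Filter.mem_of_superset self_mem_nhdsWithin fun v hv => ?_
    have := (hgspec v hv).1
    exact (dist_zero_right (g v)).le.trans this
  obtain ⟨yw, hywK, hcl⟩ := hK.exists_clusterPt hFK
  refine ⟨WeakDual.toStrongDual yw, by simpa [Metric.mem_closedBall, dist_zero_right] using hywK,
    fun p hp => ?_⟩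
  have key : ∀ ε : ℝ, 0 < ε → (WeakDual.toStrongDual yw) p.2 + ys p.1 - p.2 p.1 ≤ n + ε := by
    intro ε hε
    set C : Set (WeakDual ℝ (StrongDual ℝ X)) :=
      {zw : WeakDual ℝ (StrongDual ℝ X) | zw p.2 ≤ n + p.2 p.1 - ys p.1 + ε} with hC
    have hCclosed : IsClosed C := isClosed_le (WeakDual.eval_continuous p.2) continuous_const
    have hCF : C ∈ F := by
      rw [hF, Filter.mem_map]
      have hball : Metric.ball ys (ε / (‖p.1‖ + 1)) ∈ 𝓝[En] ys :=
        mem_nhdsWithin_of_mem_nhds (Metric.ball_mem_nhds ys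
          (div_pos hε (by positivity)))
      refine Filter.mem_of_superset (Filter.inter_mem hball self_mem_nhdsWithin)
        fun v ⟨hvb, hvE⟩ => ?_
      have h1 : (g v) p.2 + v p.1 - p.2 p.1 ≤ n := (hgspec v hvE).2 p hp
      have h2 : |v p.1 - ys p.1| ≤ ‖v - ys‖ * ‖p.1‖ := by
        have := (v - ys).le_opNorm p.1
        simpa [ContinuousLinearMap.sub_apply, Real.norm_eq_abs] using this
      have h3 : ‖v - ys‖ * ‖p.1‖ < ε := by
        have hvb' : ‖v - ys‖ < ε / (‖p.1‖ + 1) := by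
          simpa [Metric.mem_ball, dist_eq_norm] using hvb
        calc ‖v - ys‖ * ‖p.1‖ ≤ ‖v - ys‖ * (‖p.1‖ + 1) := by
              apply mul_le_mul_of_nonneg_left (by linarith) (norm_nonneg _)
          _ < ε / (‖p.1‖ + 1) * (‖p.1‖ + 1) := by
              apply mul_lt_mul_of_pos_right hvb' (by positivity)
          _ = ε := by field_simp
      show (g v) p.2 ≤ n + p.2 p.1 - ys p.1 + ε
      have : ys p.1 - v p.1 ≤ ε := by
        have := abs_le.1 (h2.trans h3.le)
        linarith [this.1]
      linarith
    have : yw ∈ C := by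
      have : ClusterPt yw (Filter.principal C) :=
        hcl.mono (Filter.le_principal_iff.2 hCF)
      have h4 := mem_closure_iff_clusterPt.2 this
      rwa [hCclosed.closure_eq] at h4
    have : yw p.2 ≤ n + p.2 p.1 - ys p.1 + ε := this
    show (WeakDual.toStrongDual yw) p.2 + ys p.1 - p.2 p.1 ≤ n + ε
    have heq : (WeakDual.toStrongDual yw) p.2 = yw p.2 := rfl
    linarith [heq ▸ this]
  have := le_of_forall_pos_le_add key
  linarith


lemma baire_uniform (A : Set (X × StrongDual ℝ X)) (xs : StrongDual ℝ X) (δ : ℝ) (hδ : 0 < δ)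
    (h : ∀ ys : StrongDual ℝ X, ‖ys - xs‖ ≤ δ →
      ∃ (yss : StrongDual ℝ (StrongDual ℝ X)) (M : ℝ), ∀ p ∈ A, yss p.2 + ys p.1 - p.2 p.1 ≤ M) :
    ∃ r N : ℝ, 0 < r ∧ 0 ≤ N ∧ ∀ ys : StrongDual ℝ X, ‖ys - xs‖ < r →
      ∃ yss : StrongDual ℝ (StrongDual ℝ X), ‖yss‖ ≤ N ∧ ∀ p ∈ A, yss p.2 + ys p.1 - p.2 p.1 ≤ N := by
  classical
  set E : ℕ → Set (StrongDual ℝ X) := fun n => {v : StrongDual ℝ X |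
    ∃ yss : StrongDual ℝ (StrongDual ℝ X), ‖yss‖ ≤ (n : ℝ) ∧ ∀ p ∈ A, yss p.2 + v p.1 - p.2 p.1 ≤ (n : ℝ)}
    with hE
  have hEmono : ∀ {n m : ℕ}, n ≤ m → E n ⊆ E m := by
    intro n m hnm v ⟨yss, h1, h2⟩
    exact ⟨yss, h1.trans (by exact_mod_cast hnm), fun p hp => (h2 p hp).trans (by exact_mod_cast hnm)⟩
  have hEconv : ∀ n, Convex ℝ (E n) := by
    intro n
    rintro v₁ ⟨y₁, hy₁, hb₁⟩ v₂ ⟨y₂, hy₂, hb₂⟩ a b ha hb hab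
    refine ⟨a • y₁ + b • y₂, ?_, fun p hp => ?_⟩
    · calc ‖a • y₁ + b • y₂‖ ≤ a * ‖y₁‖ + b * ‖y₂‖ := by
            refine (norm_add_le (a • y₁) (b • y₂)).trans ?_
            have e1 := ContinuousLinearMap.opNorm_smul_le a y₁
            have e2 := ContinuousLinearMap.opNorm_smul_le b y₂
            rw [Real.norm_eq_abs, abs_of_nonneg ha] at e1
            rw [Real.norm_eq_abs, abs_of_nonneg hb] at e2
            linarith
        _ ≤ a * n + b * n := by
            exact add_le_add (mul_le_mul_of_nonneg_left hy₁ ha)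
              (mul_le_mul_of_nonneg_left hy₂ hb)
        _ = n := by rw [← add_mul, hab, one_mul]
    · have e1 := hb₁ p hp
      have e2 := hb₂ p hp
      have : (a • y₁ + b • y₂) p.2 + (a • v₁ + b • v₂) p.1 - p.2 p.1
          = a * (y₁ p.2 + v₁ p.1 - p.2 p.1) + b * (y₂ p.2 + v₂ p.1 - p.2 p.1) := by
        simp only [ContinuousLinearMap.add_apply, ContinuousLinearMap.smul_apply, smul_eq_mul]
        linear_combination (p.2 p.1) * hab
      rw [this]
      calc a * (y₁ p.2 + v₁ p.1 - p.2 p.1) + b * (y₂ p.2 + v₂ p.1 - p.2 p.1)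
          ≤ a * n + b * n := add_le_add (mul_le_mul_of_nonneg_left e1 ha)
            (mul_le_mul_of_nonneg_left e2 hb)
        _ = n := by rw [← add_mul, hab, one_mul]
  have hcover : Metric.closedBall xs δ ⊆ ⋃ n, E n := by
    intro v hv
    rw [Metric.mem_closedBall, dist_eq_norm] at hv
    obtain ⟨yss, M, hM⟩ := h v hv
    obtain ⟨n, hn⟩ := exists_nat_ge (max ‖yss‖ M)
    refine mem_iUnion.2 ⟨n, yss, (le_max_left _ _).trans hn, fun p hp =>
      (hM p hp).trans ((le_max_right _ _).trans hn)⟩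
  -- Baire category on the closed ball
  set D : Set (StrongDual ℝ X) := Metric.closedBall xs δ with hD
  haveI : Nonempty D := ⟨⟨xs, Metric.mem_closedBall_self hδ.le⟩⟩
  haveI : CompleteSpace D := (Metric.isClosed_closedBall (x := xs) (ε := δ)).completeSpace_coe
  obtain ⟨n₀, hn₀⟩ := nonempty_interior_of_iUnion_of_closed
    (f := fun n : ℕ => ((↑) ⁻¹' closure (E n) : Set D))
    (fun n => (isClosed_closure).preimage continuous_subtype_val)
    (by
      rw [eq_univ_iff_forall]
      rintro ⟨v, hv⟩
      obtain ⟨n, hn⟩ := mem_iUnion.1 (hcover hv)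
      exact mem_iUnion.2 ⟨n, subset_closure hn⟩)
  obtain ⟨z0, hz0⟩ := hn₀
  have hz0' : ((↑) ⁻¹' closure (E n₀) : Set D) ∈ 𝓝 z0 := mem_interior_iff_mem_nhds.1 hz0
  obtain ⟨t, ht, hts⟩ := Filter.mem_comap.1 (by rwa [nhds_subtype] at hz0')
  obtain ⟨ε, hε, hball⟩ := Metric.mem_nhds_iff.1 ht
  set z : StrongDual ℝ X := ↑z0 with hz
  have hzD : ‖z - xs‖ ≤ δ := by
    have := z0.2
    rwa [Metric.mem_closedBall, dist_eq_norm] at this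
  have hlocal : ∀ y : StrongDual ℝ X, ‖y - z‖ < ε → ‖y - xs‖ ≤ δ → y ∈ closure (E n₀) := by
    intro y h1 h2
    have hyD : y ∈ D := by rwa [Metric.mem_closedBall, dist_eq_norm]
    have : y ∈ t := hball (by rwa [Metric.mem_ball, dist_eq_norm])
    exact hts (show (⟨y, hyD⟩ : D) ∈ (↑) ⁻¹' t from this)
  -- recenter the ball of closure points at xs
  set t0 : ℝ := min 1 (ε / (2 * δ)) with ht0
  have ht0pos : 0 < t0 := lt_min one_pos (by positivity)
  have ht0le1 : t0 ≤ 1 := min_le_left _ _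
  have ht0le : t0 * δ ≤ ε / 2 := by
    have h5 : t0 ≤ ε / (2 * δ) := min_le_right _ _
    calc t0 * δ ≤ ε / (2 * δ) * δ := mul_le_mul_of_nonneg_right h5 hδ.le
      _ = ε / 2 := by field_simp
  set z' : StrongDual ℝ X := z + t0 • (xs - z) with hz'
  set ε' : ℝ := min (ε / 2) (t0 * δ) with hε'
  have hε'pos : 0 < ε' := lt_min (by positivity) (by positivity)
  have hz'z : ‖z' - z‖ ≤ ε / 2 := by
    have h6 : z' - z = t0 • (xs - z) := by rw [hz']; abel
    rw [h6, norm_smul, Real.norm_eq_abs, abs_of_pos ht0pos]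
    have h7 : ‖xs - z‖ ≤ δ := by rw [norm_sub_rev]; exact hzD
    calc t0 * ‖xs - z‖ ≤ t0 * δ := mul_le_mul_of_nonneg_left h7 ht0pos.le
      _ ≤ ε / 2 := ht0le
  have hz'xs : ‖z' - xs‖ ≤ (1 - t0) * δ := by
    have h6 : z' - xs = (1 - t0) • (z - xs) := by rw [hz']; module
    rw [h6, norm_smul, Real.norm_eq_abs, abs_of_nonneg (by linarith)]
    exact mul_le_mul_of_nonneg_left hzD (by linarith)
  have hb2 : ∀ y : StrongDual ℝ X, ‖y - z'‖ < ε' → y ∈ closure (E n₀) := by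
    intro y hy
    have hyz' : ‖y - z'‖ < ε / 2 := lt_of_lt_of_le hy (min_le_left _ _)
    have hyz'' : ‖y - z'‖ < t0 * δ := lt_of_lt_of_le hy (min_le_right _ _)
    apply hlocal
    · have h8 : y - z = (y - z') + (z' - z) := by abel
      rw [h8]
      calc ‖(y - z') + (z' - z)‖ ≤ ‖y - z'‖ + ‖z' - z‖ := norm_add_le _ _
        _ < ε := by linarith
    · have h8 : y - xs = (y - z') + (z' - xs) := by abel
      rw [h8]
      calc ‖(y - z') + (z' - xs)‖ ≤ ‖y - z'‖ + ‖z' - xs‖ := norm_add_le _ _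
        _ ≤ t0 * δ + (1 - t0) * δ := by linarith
        _ = δ := by ring
  -- reflect through xs
  set w : StrongDual ℝ X := xs + (xs - z') with hw
  have hwD : ‖w - xs‖ ≤ δ := by
    have h9 : w - xs = -(z' - xs) := by rw [hw]; abel
    rw [h9, norm_neg]
    refine hz'xs.trans ?_
    have h9b : (1 - t0) * δ ≤ 1 * δ := mul_le_mul_of_nonneg_right (by linarith) hδ.le
    linarith
  obtain ⟨m₀, hm₀⟩ := mem_iUnion.1
    (hcover (by rw [Metric.mem_closedBall, dist_eq_norm]; exact hwD))
  set n₁ : ℕ := max n₀ m₀ with hn₁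
  have hcn₁ : Convex ℝ (closure (E n₁)) := (hEconv n₁).closure
  have hfinal : ∀ u : StrongDual ℝ X, ‖u - xs‖ < ε' / 2 → u ∈ closure (E n₁) := by
    intro u hu
    have hv : (u + (u - w)) ∈ closure (E n₀) := by
      apply hb2
      have h10 : (u + (u - w)) - z' = (2 : ℝ) • (u - xs) := by rw [hw]; module
      rw [h10, norm_smul, Real.norm_eq_abs]
      rw [show |(2:ℝ)| = 2 by norm_num]
      linarith
    have hv₁ : (u + (u - w)) ∈ closure (E n₁) := closure_mono (hEmono (le_max_left n₀ m₀)) hv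
    have hw₁ : w ∈ closure (E n₁) := subset_closure (hEmono (le_max_right n₀ m₀) hm₀)
    have h11 : u = (1/2 : ℝ) • (u + (u - w)) + (1/2 : ℝ) • w := by module
    rw [h11]
    exact hcn₁ hv₁ hw₁ (by norm_num) (by norm_num) (by norm_num)
  refine ⟨ε' / 2, (n₁ : ℝ), by positivity, by positivity, fun ys hys => ?_⟩
  exact closure_witness A (n₁ : ℝ) ys (hfinal ys hys)


lemma combo_lower (A : Set (X × StrongDual ℝ X)) (hmono : IsMonotoneOp A) (xs : StrongDual ℝ X)
    (r N : ℝ) (hr : 0 < r) (hN : 0 ≤ N)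
    (hstar : ∀ ys : StrongDual ℝ X, ‖ys - xs‖ < r →
      ∃ yss : StrongDual ℝ (StrongDual ℝ X), ‖yss‖ ≤ N ∧ ∀ p ∈ A, yss p.2 + ys p.1 - p.2 p.1 ≤ N) :
    ∀ l : (X × StrongDual ℝ X) →₀ ℝ, (∀ p, 0 ≤ l p) → ↑l.support ⊆ A →
      -(max N ((N + N * ‖xs‖) / (r / 2))) * ‖comboW xs l‖ ≤ comboS xs l := by
  set r₁ : ℝ := r / 2 with hr₁
  have hr₁pos : 0 < r₁ := by positivity
  set N₂ : ℝ := N + N * ‖xs‖ with hN₂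
  have hN₂0 : 0 ≤ N₂ := by positivity
  set K : ℝ := max N (N₂ / r₁) with hK
  have hK0 : 0 ≤ K := le_trans hN (le_max_left _ _)
  -- simplex case
  have hsimplex : ∀ l : (X × StrongDual ℝ X) →₀ ℝ, (∀ p, 0 ≤ l p) → ↑l.support ⊆ A →
      (l.sum fun _ v => v) = 1 → -K * ‖comboW xs l‖ ≤ comboS xs l := by
    intro l hpos hsupp hone
    set σ : ℝ := comboS xs l with hσ
    set w : StrongDual ℝ X := comboW xs l with hwdef
    set abar : X := comboA l with habar
    have hmonoineq : w abar ≤ σ := by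
      have := combo_mono A hmono xs l hpos hsupp
      rwa [hone, one_mul] at this
    -- uniform lower bound
    have hunif : ∀ vs : StrongDual ℝ X, ‖vs‖ ≤ r₁ → vs abar - N * ‖w‖ - N₂ ≤ σ := by
      intro vs hvs
      obtain ⟨yss, hyssN, hyss⟩ := hstar (xs + vs) (by
        rw [add_sub_cancel_left]
        exact lt_of_le_of_lt hvs (by linarith))
      have hpt : ∀ p ∈ A, yss (p.2 - xs) + vs p.1 - N₂ ≤ (p.2 - xs) p.1 := by
        intro p hp
        have h1 := hyss p hp
        have h2 : yss (p.2 - xs) = yss p.2 - yss xs := by rw [map_sub]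
        have h3 : |yss xs| ≤ N * ‖xs‖ := by
          have h3a := yss.le_opNorm xs
          rw [Real.norm_eq_abs] at h3a
          exact h3a.trans (mul_le_mul_of_nonneg_right hyssN (norm_nonneg _))
        have h4 : (p.2 - xs) p.1 = p.2 p.1 - xs p.1 := rfl
        have h5 : (xs + vs) p.1 = xs p.1 + vs p.1 := rfl
        rw [h5] at h1
        have h6 := (abs_le.1 h3).1
        rw [h2, h4, hN₂]
        linarith
      have hsum : yss w + vs abar - N₂ ≤ σ := by
        have e1 : yss w = l.sum fun p v => v * yss (p.2 - xs) := by
          rw [hwdef]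
          unfold comboW
          rw [map_finsuppSum]
          exact Finsupp.sum_congr fun p _ => by rw [map_smul]; rfl
        have e2 : vs abar = l.sum fun p v => v * vs p.1 := by
          rw [habar]
          unfold comboA
          rw [map_finsuppSum]
          exact Finsupp.sum_congr fun p _ => by rw [map_smul]; rfl
        have e3 : N₂ = l.sum fun p v => v * N₂ := by
          rw [← Finsupp.sum_mul, hone, one_mul]
        rw [e1, e2]
        nth_rewrite 1 [e3]
        rw [hσ]
        unfold comboS
        simp only [Finsupp.sum]
        rw [← Finset.sum_add_distrib, ← Finset.sum_sub_distrib]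
        apply Finset.sum_le_sum
        intro p hp
        nlinarith [mul_le_mul_of_nonneg_left (hpt p (hsupp hp)) (hpos p)]
      have h7 : -(N * ‖w‖) ≤ yss w := by
        have h7a := yss.le_opNorm w
        rw [Real.norm_eq_abs] at h7a
        have h8 := (abs_le.1 (h7a.trans
          (mul_le_mul_of_nonneg_right hyssN (norm_nonneg _)))).1
        linarith
      linarith
    -- dual norm attainment on abar
    have hsup : r₁ * ‖abar‖ - N * ‖w‖ - N₂ ≤ σ := by
      by_cases habar0 : abar = 0
      · have := hunif 0 (by simp [hr₁pos.le])
        simp only [habar0, norm_zero, mul_zero, ContinuousLinearMap.zero_apply] at this ⊢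
        linarith [this]
      · obtain ⟨g, hg1, hg2⟩ := exists_dual_vector ℝ abar (norm_ne_zero_iff.2 habar0)
        have hnorm : ‖r₁ • g‖ ≤ r₁ := by
          have hns := norm_smul r₁ g
          rw [hns, Real.norm_eq_abs, abs_of_pos hr₁pos, hg1, mul_one]
        have := hunif (r₁ • g) hnorm
        have happ : (r₁ • g) abar = r₁ * ‖abar‖ := by
          rw [ContinuousLinearMap.smul_apply, smul_eq_mul]
          norm_num [hg2]
        rw [happ] at this
        linarith
    -- case analysis
    by_cases hcase : ‖abar‖ ≤ K
    · have h1 : -(‖w‖ * ‖abar‖) ≤ w abar := by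
        have h1a := w.le_opNorm abar
        rw [Real.norm_eq_abs] at h1a
        linarith [(abs_le.1 h1a).1]
      have h2 : ‖w‖ * ‖abar‖ ≤ ‖w‖ * K := mul_le_mul_of_nonneg_left hcase (norm_nonneg _)
      have : -K * ‖w‖ ≤ w abar := by nlinarith
      linarith
    · push_neg at hcase
      have hKge : N₂ / r₁ ≤ K := le_max_right _ _
      have h1 : N₂ ≤ r₁ * ‖abar‖ := by
        have : N₂ / r₁ * r₁ ≤ ‖abar‖ * r₁ :=
          mul_le_mul_of_nonneg_right (hKge.trans hcase.le) hr₁pos.le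
        rw [div_mul_cancel₀ _ (ne_of_gt hr₁pos)] at this
        linarith [this]
      have h2 : N * ‖w‖ ≤ K * ‖w‖ :=
        mul_le_mul_of_nonneg_right (le_max_left _ _) (norm_nonneg _)
      linarith
  -- homogenization
  intro l hpos hsupp
  by_cases hl0 : l = 0
  · simp [hl0, comboW_zero, comboS_zero]
  · have hsupne : l.support.Nonempty := Finsupp.support_nonempty_iff.2 hl0
    have htpos : 0 < l.sum fun _ v => v := by
      apply Finset.sum_pos _ hsupne
      intro p hp
      exact lt_of_le_of_ne (hpos p) (Ne.symm (Finsupp.mem_support_iff.1 hp))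
    set t : ℝ := l.sum fun _ v => v with ht
    have key := hsimplex (t⁻¹ • l)
      (fun p => by
        rw [Finsupp.smul_apply, smul_eq_mul]
        exact mul_nonneg (inv_nonneg.2 htpos.le) (hpos p))
      (by
        refine Subset.trans ?_ hsupp
        exact Finset.coe_subset.2 Finsupp.support_smul)
      (by rw [comboT_smul, ← ht, inv_mul_cancel₀ (ne_of_gt htpos)])
    rw [comboW_smul, comboS_smul, norm_smul, Real.norm_eq_abs,
      abs_of_pos (inv_pos.2 htpos)] at key
    have key2 := mul_le_mul_of_nonneg_left key htpos.le
    have htne : t ≠ 0 := ne_of_gt htpos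
    have e1 : t * (-K * (t⁻¹ * ‖comboW xs l‖)) = -K * ‖comboW xs l‖ := by
      field_simp
    have e2 : t * (t⁻¹ * comboS xs l) = comboS xs l := by
      field_simp
    linarith [key2, e1, e2]


lemma core_functional (A : Set (X × StrongDual ℝ X)) (hmono : IsMonotoneOp A) (xs : StrongDual ℝ X)
    (K : ℝ) (hK0 : 0 ≤ K)
    (hlow : ∀ l : (X × StrongDual ℝ X) →₀ ℝ, (∀ p, 0 ≤ l p) → ↑l.support ⊆ A →
      -K * ‖comboW xs l‖ ≤ comboS xs l) :
    ∃ L : StrongDual ℝ (StrongDual ℝ X), ∀ p ∈ A, L (p.2 - xs) ≤ (p.2 - xs) p.1 := by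
  classical
  set QS : StrongDual ℝ X → Set ℝ := fun u => {x | ∃ l : (X × StrongDual ℝ X) →₀ ℝ,
    (∀ p, 0 ≤ l p) ∧ ↑l.support ⊆ A ∧ x = comboS xs l + K * ‖u - comboW xs l‖} with hQS
  have hQS0 : ∀ u, K * ‖u‖ ∈ QS u := by
    intro u
    exact ⟨0, fun p => le_refl 0, by simp, by simp [comboS_zero, comboW_zero]⟩
  have hbdd : ∀ u, ∀ x ∈ QS u, -K * ‖u‖ ≤ x := by
    rintro u x ⟨l, hpos, hsupp, rfl⟩
    have h1 := hlow l hpos hsupp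
    have h2 : ‖comboW xs l‖ ≤ ‖u‖ + ‖u - comboW xs l‖ :=
      norm_le_norm_add_norm_sub u (comboW xs l)
    nlinarith [mul_le_mul_of_nonneg_left h2 hK0]
  have hQSne : ∀ u, (QS u).Nonempty := fun u => ⟨K * ‖u‖, hQS0 u⟩
  have hQSbdd : ∀ u, BddBelow (QS u) := fun u => ⟨-K * ‖u‖, fun x hx => hbdd u x hx⟩
  set Q : StrongDual ℝ X → ℝ := fun u => sInf (QS u) with hQ
  have hQle : ∀ u, Q u ≤ K * ‖u‖ := fun u => csInf_le (hQSbdd u) (hQS0 u)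
  have hQge : ∀ u, -K * ‖u‖ ≤ Q u := fun u => le_csInf (hQSne u) (fun x hx => hbdd u x hx)
  have hsingle : ∀ p ∈ A, Q (p.2 - xs) ≤ (p.2 - xs) p.1 := by
    intro p hp
    apply csInf_le (hQSbdd _)
    refine ⟨Finsupp.single p 1, ?_, ?_, ?_⟩
    · intro q
      by_cases hq : p = q <;> simp [Finsupp.single_apply, hq]
    · intro q hq
      have h1 : q ∈ ({p} : Finset (X × StrongDual ℝ X)) :=
        Finsupp.support_single_subset (Finset.mem_coe.1 hq)
      rw [Finset.mem_singleton] at h1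
      rwa [h1]
    · rw [comboS_single, comboW_single]
      simp
  have hQadd : ∀ u v, Q (u + v) ≤ Q u + Q v := by
    intro u v
    have step : ∀ x₁ ∈ QS u, ∀ x₂ ∈ QS v, Q (u + v) ≤ x₁ + x₂ := by
      rintro x₁ ⟨l₁, hpos₁, hsupp₁, rfl⟩ x₂ ⟨l₂, hpos₂, hsupp₂, rfl⟩
      have hmem : comboS xs (l₁ + l₂) + K * ‖(u + v) - comboW xs (l₁ + l₂)‖ ∈ QS (u + v) := by
        refine ⟨l₁ + l₂, fun p => ?_, ?_, rfl⟩
        · rw [Finsupp.add_apply]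
          exact add_nonneg (hpos₁ p) (hpos₂ p)
        · refine Subset.trans ?_ (union_subset hsupp₁ hsupp₂)
          exact_mod_cast Finsupp.support_add
      refine (csInf_le (hQSbdd _) hmem).trans ?_
      rw [comboS_add, comboW_add]
      have htri : ‖(u + v) - (comboW xs l₁ + comboW xs l₂)‖
          ≤ ‖u - comboW xs l₁‖ + ‖v - comboW xs l₂‖ := by
        have : (u + v) - (comboW xs l₁ + comboW xs l₂)
            = (u - comboW xs l₁) + (v - comboW xs l₂) := by abel
        rw [this]
        exact norm_add_le _ _
      nlinarith [mul_le_mul_of_nonneg_left htri hK0]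
    have h1 : ∀ x₁ ∈ QS u, Q (u + v) - x₁ ≤ Q v := by
      intro x₁ hx₁
      refine le_csInf (hQSne v) fun x₂ hx₂ => ?_
      linarith [step x₁ hx₁ x₂ hx₂]
    have h2 : Q (u + v) - Q v ≤ Q u := by
      refine le_csInf (hQSne u) fun x₁ hx₁ => ?_
      linarith [h1 x₁ hx₁]
    linarith
  have hQsmul : ∀ c : ℝ, 0 < c → ∀ u, Q (c • u) = c * Q u := by
    have hle : ∀ c : ℝ, 0 < c → ∀ u, Q (c • u) ≤ c * Q u := by
      intro c hc u
      have h1 : Q (c • u) / c ≤ Q u := by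
        refine le_csInf (hQSne u) ?_
        rintro x ⟨l, hpos, hsupp, rfl⟩
        rw [div_le_iff₀ hc]
        have hmem : comboS xs (c • l) + K * ‖(c • u) - comboW xs (c • l)‖ ∈ QS (c • u) := by
          refine ⟨c • l, fun p => ?_, ?_, rfl⟩
          · rw [Finsupp.smul_apply, smul_eq_mul]
            exact mul_nonneg hc.le (hpos p)
          · refine Subset.trans ?_ hsupp
            exact Finset.coe_subset.2 Finsupp.support_smul
        refine (csInf_le (hQSbdd _) hmem).trans ?_
        rw [comboS_smul, comboW_smul]
        have : (c • u) - c • comboW xs l = c • (u - comboW xs l) := by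
          rw [smul_sub]
        rw [this, norm_smul, Real.norm_eq_abs, abs_of_pos hc]
        ring_nf
        nlinarith [norm_nonneg (u - comboW xs l)]
      rw [div_le_iff₀ hc] at h1
      linarith [h1]
    intro c hc u
    refine le_antisymm (hle c hc u) ?_
    have h2 := hle c⁻¹ (inv_pos.2 hc) (c • u)
    rw [inv_smul_smul₀ (ne_of_gt hc)] at h2
    have := mul_le_mul_of_nonneg_left h2 hc.le
    rw [← mul_assoc, mul_inv_cancel₀ (ne_of_gt hc), one_mul] at this
    linarith
  have hQzero : Q 0 = 0 := by
    have h1 := hQle 0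
    have h2 := hQge 0
    simp only [norm_zero, mul_zero] at h1 h2
    linarith
  -- Hahn-Banach
  obtain ⟨g, -, hg⟩ := exists_extension_of_le_sublinear
    ⟨(⊥ : Submodule ℝ (StrongDual ℝ X)), 0⟩ Q hQsmul hQadd
    (by
      rintro ⟨x, hx⟩
      have hx0 : x = 0 := (Submodule.mem_bot ℝ).1 hx
      simp [hx0, hQzero])
  have hgbound : ∀ u, ‖g u‖ ≤ K * ‖u‖ := by
    intro u
    rw [Real.norm_eq_abs, abs_le]
    constructor
    · have := hg (-u)
      rw [map_neg] at this
      have h2 := hQle (-u)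
      rw [norm_neg] at h2
      linarith
    · linarith [hg u, hQle u]
  refine ⟨g.mkContinuous K hgbound, fun p hp => ?_⟩
  have : g.mkContinuous K hgbound (p.2 - xs) = g (p.2 - xs) := rfl
  rw [this]
  exact (hg _).trans (hsingle p hp)


lemma umm_interior_phi_subset_ran (A : Set (X × StrongDual ℝ X)) (hA : IsUltraMaxMonotone A) :
    interior (Prod.snd '' {q : StrongDual ℝ (StrongDual ℝ X) × StrongDual ℝ X | phiFitz A q < ⊤}) ⊆ ranOp A := by
  intro xs hxs
  obtain ⟨δ, hδpos, hδ⟩ : ∃ δ > 0, Metric.closedBall xs δ ⊆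
      Prod.snd '' {q : StrongDual ℝ (StrongDual ℝ X) × StrongDual ℝ X | phiFitz A q < ⊤} := by
    have := mem_interior_iff_mem_nhds.1 hxs
    exact (Metric.nhds_basis_closedBall.mem_iff).1 this
  have hball : ∀ ys : StrongDual ℝ X, ‖ys - xs‖ ≤ δ →
      ∃ (yss : StrongDual ℝ (StrongDual ℝ X)) (M : ℝ), ∀ p ∈ A, yss p.2 + ys p.1 - p.2 p.1 ≤ M := by
    intro ys hys
    obtain ⟨q, hq, hq2⟩ := hδ (by rwa [Metric.mem_closedBall, dist_eq_norm])
    obtain ⟨M, hM⟩ := (ereal_iSup_lt_top_iff _).1 hq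
    refine ⟨q.1, M, fun p hp => ?_⟩
    have := hM ⟨p, hp⟩
    rw [hq2] at this
    exact this
  obtain ⟨r, N, hr, hN, hstar⟩ := baire_uniform A xs δ hδpos hball
  have hK0 : (0:ℝ) ≤ max N ((N + N * ‖xs‖) / (r / 2)) := le_trans hN (le_max_left _ _)
  have hlow := combo_lower A hA.1 xs r N hr hN hstar
  obtain ⟨L, hL⟩ := core_functional A hA.1 xs _ hK0 hlow
  obtain ⟨x, -, hx⟩ := hA.2 L xs (fun p hp => by
    have h := hL p hp
    have e1 : xs - p.2 = -(p.2 - xs) := by abel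
    have e2 : (L - inclusionInDoubleDual ℝ X p.1) (xs - p.2)
        = L (xs - p.2) - (xs - p.2) p.1 := by
      rw [ContinuousLinearMap.sub_apply, dual_def]
    have e3 : L (xs - p.2) = -L (p.2 - xs) := by rw [e1, map_neg]
    have e4 : (xs - p.2) p.1 = -((p.2 - xs) p.1) := by
      rw [e1]; rfl
    rw [e2, e3, e4]
    linarith)
  exact ⟨x, hx⟩

end UMMAux

theorem stmt1 [CompleteSpace X] (A : Set (X × StrongDual ℝ X)) (hA : IsUltraMaxMonotone A) :
    interior (ranOp A) = interior (convexHull ℝ (ranOp A)) ∧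
    interior (ranOp A) = interior (Prod.snd '' {q : X × StrongDual ℝ X | fitz A q < ⊤}) ∧
    interior (ranOp A) =
      interior (Prod.snd '' {q : StrongDual ℝ (StrongDual ℝ X) × StrongDual ℝ X | phiFitz A q < ⊤}) := by
  have hmono := hA.1
  set SF := Prod.snd '' {q : X × StrongDual ℝ X | fitz A q < ⊤} with hSF
  set SP := Prod.snd '' {q : StrongDual ℝ (StrongDual ℝ X) × StrongDual ℝ X | phiFitz A q < ⊤} with hSP
  have h1 : ranOp A ⊆ convexHull ℝ (ranOp A) := subset_convexHull ℝ _
  have hRF : ranOp A ⊆ SF := by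
    rintro xstar ⟨x, hxA⟩
    refine ⟨(x, xstar), ?_, rfl⟩
    show fitz A (x, xstar) < ⊤
    refine (ereal_iSup_lt_top_iff _).2 ⟨xstar x, fun p => ?_⟩
    have hm := hmono (x, xstar) hxA p.1 p.2
    have e : ((x, xstar).2 - p.1.2) ((x, xstar).1 - p.1.1)
        = xstar x - xstar p.1.1 - p.1.2 x + p.1.2 p.1.1 := by
      rw [ContinuousLinearMap.sub_apply, map_sub, map_sub]
      ring
    rw [e] at hm
    linarith
  have hFconv : Convex ℝ SF := by
    rintro x₁ ⟨q₁, hq₁, rfl⟩ x₂ ⟨q₂, hq₂, rfl⟩ a b ha hb hab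
    obtain ⟨M₁, hM₁⟩ := (ereal_iSup_lt_top_iff _).1 hq₁
    obtain ⟨M₂, hM₂⟩ := (ereal_iSup_lt_top_iff _).1 hq₂
    refine ⟨(a • q₁.1 + b • q₂.1, a • q₁.2 + b • q₂.2), ?_, rfl⟩
    show fitz A (a • q₁.1 + b • q₂.1, a • q₁.2 + b • q₂.2) < ⊤
    refine (ereal_iSup_lt_top_iff _).2 ⟨a * M₁ + b * M₂, fun p => ?_⟩
    have e : p.1.2 ((a • q₁.1 + b • q₂.1, a • q₁.2 + b • q₂.2).1)
          + ((a • q₁.1 + b • q₂.1, a • q₁.2 + b • q₂.2).2) p.1.1 - p.1.2 p.1.1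
        = a * (p.1.2 q₁.1 + q₁.2 p.1.1 - p.1.2 p.1.1)
          + b * (p.1.2 q₂.1 + q₂.2 p.1.1 - p.1.2 p.1.1) := by
      simp only [map_add, map_smul, smul_eq_mul, ContinuousLinearMap.add_apply,
        ContinuousLinearMap.smul_apply]
      linear_combination (p.1.2 p.1.1) * hab
    rw [e]
    exact add_le_add (mul_le_mul_of_nonneg_left (hM₁ p) ha)
      (mul_le_mul_of_nonneg_left (hM₂ p) hb)
  have h2 : convexHull ℝ (ranOp A) ⊆ SF := convexHull_min hRF hFconv
  have h3 : SF ⊆ SP := by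
    rintro xstar ⟨q, hq, rfl⟩
    obtain ⟨M, hM⟩ := (ereal_iSup_lt_top_iff _).1 hq
    refine ⟨(inclusionInDoubleDual ℝ X q.1, q.2), ?_, rfl⟩
    show phiFitz A (inclusionInDoubleDual ℝ X q.1, q.2) < ⊤
    refine (ereal_iSup_lt_top_iff _).2 ⟨M, fun p => ?_⟩
    have := hM p
    rw [dual_def]
    exact this
  have h4 : interior SP ⊆ ranOp A := umm_interior_phi_subset_ran A hA
  have i1 : interior (ranOp A) ⊆ interior (convexHull ℝ (ranOp A)) := interior_mono h1
  have i2 : interior (convexHull ℝ (ranOp A)) ⊆ interior SF := interior_mono h2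
  have i3 : interior SF ⊆ interior SP := interior_mono h3
  have i4 : interior SP ⊆ interior (ranOp A) := interior_maximal h4 isOpen_interior
  exact ⟨subset_antisymm i1 (i2.trans (i3.trans i4)),
    subset_antisymm (i1.trans i2) (i3.trans i4),
    subset_antisymm (i1.trans (i2.trans i3)) i4⟩
end

section
/- Let X be a real Banach space and let A : X ⇉ X* be ultramaximally monotone. Then the following four sets are equal: the norm closure of ran A, the norm closure of conv(ran A), the norm closure of P_{X*}(dom F_A), and the norm closure of P_{X*}(dom Φ_A), where P_{X*} denotes the projection of X × X* (respectively X** × X*) onto the X* coordinate. -/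
open Pointwise Set NormedSpace

variable {X : Type*} [NormedAddCommGroup X] [NormedSpace ℝ X]

/- ===================== auxiliary development ===================== -/

section UMMAux

open Filter Topology


private theorem umm_ekeland {M : Type*} [MetricSpace M] [CompleteSpace M]
    (f : M → ℝ) (hlsc : LowerSemicontinuous f) (hbd : ∀ z, 0 ≤ f z)
    (σ : ℝ) (hσ : 0 < σ) (z₀ : M) :
    ∃ w, f w ≤ f z₀ ∧ σ * dist w z₀ ≤ f z₀ ∧ ∀ z, f w ≤ f z + σ * dist z w := by
  set S : M → Set M := fun z => {w | f w + σ * dist w z ≤ f z} with hSdef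
  have hself : ∀ z, z ∈ S z := by intro z; simp [hSdef]
  have pick : ∀ (n : ℕ) (z : M), ∃ w, w ∈ S z ∧ f w ≤ sInf (f '' S z) + (1/2)^n := by
    intro n z
    have hne : (f '' S z).Nonempty := ⟨f z, z, hself z, rfl⟩
    obtain ⟨r, hr, hrlt⟩ := Real.lt_sInf_add_pos hne (by positivity : (0:ℝ) < (1/2)^n)
    obtain ⟨w, hw, rfl⟩ := hr
    exact ⟨w, hw, hrlt.le⟩
  choose nxt hnxt1 hnxt2 using pick
  let seq : ℕ → M := fun n => Nat.rec z₀ (fun n z => nxt n z) n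
  have hseq0 : seq 0 = z₀ := rfl
  have hmem : ∀ n, seq (n+1) ∈ S (seq n) := fun n => hnxt1 n (seq n)
  have htrans : ∀ z w u, w ∈ S z → u ∈ S w → u ∈ S z := by
    intro z w u hw hu
    simp only [hSdef, mem_setOf_eq] at *
    have htri : dist u z ≤ dist u w + dist w z := dist_triangle u w z
    nlinarith [hσ.le]
  have hchain : ∀ n m, n ≤ m → seq m ∈ S (seq n) := by
    intro n m hnm
    induction m, hnm using Nat.le_induction with
    | base => exact hself _
    | succ m hnm ih => exact htrans _ _ _ ih (hmem m)
  have hchain' : ∀ n m, n ≤ m → f (seq m) + σ * dist (seq m) (seq n) ≤ f (seq n) :=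
    fun n m h => hchain n m h
  have hdec : ∀ n m, n ≤ m → f (seq m) ≤ f (seq n) := by
    intro n m h
    have := hchain' n m h
    nlinarith [dist_nonneg (x := seq m) (y := seq n), hσ.le]
  have hbdd : BddBelow (range fun n => f (seq n)) := ⟨0, by rintro r ⟨n, rfl⟩; exact hbd _⟩
  have hanti : Antitone fun n => f (seq n) := fun n m h => hdec n m h
  have hL : Tendsto (fun n => f (seq n)) atTop (𝓝 (⨅ n, f (seq n))) :=
    tendsto_atTop_ciInf hanti hbdd
  set L := ⨅ n, f (seq n) with hLdef
  have hLle : ∀ n, L ≤ f (seq n) := fun n => ciInf_le hbdd n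
  have hcauchy : CauchySeq seq := by
    rw [Metric.cauchySeq_iff']
    intro ε hε
    have : ∀ᶠ n in atTop, f (seq n) < L + σ * ε := by
      have := hL.eventually (eventually_lt_nhds (by nlinarith : L < L + σ * ε))
      exact this
    obtain ⟨N, hN⟩ := this.exists
    refine ⟨N, fun n hn => ?_⟩
    have h1 := hchain' N n hn
    have h2 := hLle n
    have : σ * dist (seq n) (seq N) < σ * ε := by nlinarith
    exact lt_of_mul_lt_mul_left this hσ.le
  obtain ⟨w, hw⟩ := cauchySeq_tendsto_of_complete hcauchy
  have hfwL : f w ≤ L := by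
    by_contra hc
    push_neg at hc
    have hy : (L + f w)/2 < f w := by linarith
    have hev : ∀ᶠ n in atTop, (L + f w)/2 < f (seq n) :=
      hw.eventually (hlsc w _ hy)
    have : (L + f w)/2 ≤ L := ge_of_tendsto hL (hev.mono fun n h => h.le)
    linarith
  have hfw_le : ∀ n, f w + σ * dist w (seq n) ≤ f (seq n) := by
    intro n
    have hdtend : Tendsto (fun m => σ * dist (seq m) (seq n)) atTop (𝓝 (σ * dist w (seq n))) :=
      (((continuous_dist.tendsto (w, seq n)).comp (hw.prodMk_nhds tendsto_const_nhds)).const_mul σ)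
    have hsum : Tendsto (fun m => f (seq m) + σ * dist (seq m) (seq n)) atTop
        (𝓝 (L + σ * dist w (seq n))) := hL.add hdtend
    have : L + σ * dist w (seq n) ≤ f (seq n) :=
      le_of_tendsto hsum (eventually_atTop.2 ⟨n, fun m hm => hchain' n m hm⟩)
    linarith
  have h0 := hfw_le 0
  rw [hseq0] at h0
  refine ⟨w, by nlinarith [dist_nonneg (x := w) (y := z₀), hσ.le],
    by nlinarith [hbd w], ?_⟩
  intro z
  by_contra hc
  push_neg at hc
  have hzS : ∀ n, f z + σ * dist z (seq n) ≤ f (seq n) := by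
    intro n
    have htri : dist z (seq n) ≤ dist z w + dist w (seq n) := dist_triangle _ _ _
    have := hfw_le n
    nlinarith [hσ.le]
  have hinf : ∀ n, f (seq (n+1)) ≤ f z + (1/2)^n := by
    intro n
    refine le_trans (hnxt2 n (seq n)) ?_
    have hfz : f z ∈ f '' S (seq n) := ⟨z, hzS n, rfl⟩
    have : sInf (f '' S (seq n)) ≤ f z :=
      csInf_le ⟨0, by rintro r ⟨u, _, rfl⟩; exact hbd u⟩ hfz
    linarith
  have hLfz : L ≤ f z := by
    have h1 : Tendsto (fun n => f (seq (n+1))) atTop (𝓝 L) := hL.comp (tendsto_add_atTop_nat 1)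
    have h2 : Tendsto (fun n : ℕ => f z + (1/2:ℝ)^n) atTop (𝓝 (f z + 0)) :=
      tendsto_const_nhds.add (tendsto_pow_atTop_nhds_zero_of_lt_one (by norm_num) (by norm_num))
    have := le_of_tendsto_of_tendsto' h1 h2 hinf
    simpa using this
  nlinarith [dist_nonneg (x := z) (y := w), hσ.le, hfwL]



/-- the pairing `⟨z.1, z.2⟩`. -/
private def prq (z : X × StrongDual ℝ X) : ℝ := z.2 z.1

/-- the affine function in the Fitzpatrick sup. -/
private def lfq (α z : X × StrongDual ℝ X) : ℝ := α.2 z.1 + z.2 α.1 - α.2 α.1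

/-- linear part of `lfq α`. -/
private def lmq (α e : X × StrongDual ℝ X) : ℝ := α.2 e.1 + e.2 α.1

private theorem lfq_add (α z e : X × StrongDual ℝ X) : lfq α (z + e) = lfq α z + lmq α e := by
  simp [lfq, lmq, Prod.fst_add, Prod.snd_add, ContinuousLinearMap.add_apply, map_add]; ring

private theorem lfq_smul_line (α z e : X × StrongDual ℝ X) (t : ℝ) :
    lfq α (z + t • e) = lfq α z + t * lmq α e := by
  simp [lfq, lmq, Prod.fst_add, Prod.snd_add, Prod.smul_fst, Prod.smul_snd,
    ContinuousLinearMap.add_apply, map_add, map_smul, ContinuousLinearMap.smul_apply]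
  ring

private theorem prq_smul_line (z e : X × StrongDual ℝ X) (t : ℝ) :
    prq (z + t • e) = prq z + t * (z.2 e.1 + e.2 z.1) + t^2 * e.2 e.1 := by
  simp [prq, Prod.fst_add, Prod.snd_add, Prod.smul_fst, Prod.smul_snd,
    ContinuousLinearMap.add_apply, map_add, map_smul, ContinuousLinearMap.smul_apply]
  ring

/-- A is nonempty. -/
private theorem umm_nonempty {A : Set (X × StrongDual ℝ X)} (hA : IsUltraMaxMonotone A) :
    A.Nonempty := by
  by_contra h
  rw [Set.not_nonempty_iff_eq_empty] at h
  obtain ⟨x, -, hx⟩ := hA.2 0 0 (fun p hp => by simp [h] at hp)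
  simp [h] at hx

/-- NI property derived from ultramaximality. -/
private theorem umm_ni {A : Set (X × StrongDual ℝ X)} (hA : IsUltraMaxMonotone A)
    (ψ : StrongDual ℝ (StrongDual ℝ X)) (y : StrongDual ℝ X) (r : ℝ)
    (h : ∀ α ∈ A, ψ α.2 + y α.1 - α.2 α.1 ≤ r) : ψ y ≤ r := by
  by_contra hc
  push_neg at hc
  obtain ⟨x, -, hxA⟩ := hA.2 ψ y (fun p hp => by
    have h1 := h p hp
    have h2 : (ψ - inclusionInDoubleDual ℝ X p.1) (y - p.2)
        = ψ y - (ψ p.2 + y p.1 - p.2 p.1) := by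
      simp [ContinuousLinearMap.sub_apply, map_sub, NormedSpace.dual_def]
      ring
    rw [h2]; linarith)
  have := h (x, y) hxA
  simp only [prq] at this
  linarith

/-- canonical NI : `F_A ≥ π`. -/
private theorem umm_ni' {A : Set (X × StrongDual ℝ X)} (hA : IsUltraMaxMonotone A)
    (z : X × StrongDual ℝ X) (r : ℝ)
    (h : ∀ α ∈ A, lfq α z ≤ r) : prq z ≤ r := by
  have := umm_ni hA (inclusionInDoubleDual ℝ X z.1) z.2 r (fun α hα => by
    have := h α hα
    simpa [lfq, NormedSpace.dual_def, add_comm] using this)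
  simpa [prq, NormedSpace.dual_def] using this

private theorem umm_mono {A : Set (X × StrongDual ℝ X)} (hA : IsUltraMaxMonotone A)
    {α β : X × StrongDual ℝ X} (hα : α ∈ A) (hβ : β ∈ A) : lfq β α ≤ prq α := by
  have := hA.1 α hα β hβ
  simp only [ContinuousLinearMap.sub_apply, map_sub] at this
  simp only [lfq, prq]
  linarith

/-- from finiteness of fitz get a real bound. -/
private theorem fitz_bound {A : Set (X × StrongDual ℝ X)} (hne : A.Nonempty)
    {q : X × StrongDual ℝ X} (h : fitz A q < ⊤) : ∃ r : ℝ, ∀ α ∈ A, lfq α q ≤ r := by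
  obtain ⟨α₀, hα₀⟩ := hne
  have hbot : ((lfq α₀ q : ℝ) : EReal) ≤ fitz A q := by
    have := le_iSup (fun p : A => ((p.1.2 q.1 + q.2 p.1.1 - p.1.2 p.1.1 : ℝ) : EReal)) ⟨α₀, hα₀⟩
    simpa [lfq, fitz, sub_eq_add_neg] using this
  have hne_bot : fitz A q ≠ ⊥ := fun hb => by simp [hb] at hbot
  refine ⟨(fitz A q).toReal, fun α hα => ?_⟩
  have h1 : ((lfq α q : ℝ) : EReal) ≤ fitz A q := by
    have := le_iSup (fun p : A => ((p.1.2 q.1 + q.2 p.1.1 - p.1.2 p.1.1 : ℝ) : EReal)) ⟨α, hα⟩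
    simpa [lfq, fitz, sub_eq_add_neg] using this
  have h2 : fitz A q = ((fitz A q).toReal : EReal) := (EReal.coe_toReal h.ne hne_bot).symm
  rw [h2] at h1
  exact_mod_cast h1

private theorem fitz_lt_top {A : Set (X × StrongDual ℝ X)} {q : X × StrongDual ℝ X}
    {r : ℝ} (h : ∀ α ∈ A, lfq α q ≤ r) : fitz A q < ⊤ := by
  refine lt_of_le_of_lt (iSup_le fun p => ?_) (EReal.coe_lt_top r)
  have := h p.1 p.2
  simp only [lfq] at this
  exact_mod_cast this

private theorem phiFitz_bound {A : Set (X × StrongDual ℝ X)} (hne : A.Nonempty)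
    {q : StrongDual ℝ (StrongDual ℝ X) × StrongDual ℝ X} (h : phiFitz A q < ⊤) :
    ∃ r : ℝ, ∀ α ∈ A, q.1 α.2 + q.2 α.1 - α.2 α.1 ≤ r := by
  obtain ⟨α₀, hα₀⟩ := hne
  have hbot : ((q.1 α₀.2 + q.2 α₀.1 - α₀.2 α₀.1 : ℝ) : EReal) ≤ phiFitz A q :=
    le_iSup (fun p : A => ((q.1 p.1.2 + q.2 p.1.1 - p.1.2 p.1.1 : ℝ) : EReal)) ⟨α₀, hα₀⟩
  have hne_bot : phiFitz A q ≠ ⊥ := by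
    intro hb; rw [hb, le_bot_iff] at hbot; norm_cast at hbot
  refine ⟨(phiFitz A q).toReal, fun α hα => ?_⟩
  have h1 : ((q.1 α.2 + q.2 α.1 - α.2 α.1 : ℝ) : EReal) ≤ phiFitz A q :=
    le_iSup (fun p : A => ((q.1 p.1.2 + q.2 p.1.1 - p.1.2 p.1.1 : ℝ) : EReal)) ⟨α, hα⟩
  have h2 : phiFitz A q = ((phiFitz A q).toReal : EReal) := (EReal.coe_toReal h.ne hne_bot).symm
  rw [h2] at h1
  exact_mod_cast h1

private theorem prq_cont : Continuous (prq : X × StrongDual ℝ X → ℝ) := by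
  have := (isBoundedBilinearMap_apply (𝕜 := ℝ) (E := X) (F := ℝ)).continuous
  exact this.comp (continuous_snd.prodMk continuous_fst)

private theorem lfq_cont (α : X × StrongDual ℝ X) : Continuous fun z : X × StrongDual ℝ X => lfq α z := by
  have h1 : Continuous fun z : X × StrongDual ℝ X => α.2 z.1 := α.2.continuous.comp continuous_fst
  have h2 : Continuous fun z : X × StrongDual ℝ X => z.2 α.1 := by
    have := (isBoundedBilinearMap_apply (𝕜 := ℝ) (E := X) (F := ℝ)).continuous
    exact this.comp (continuous_snd.prodMk continuous_const)
  exact (h1.add h2).sub continuous_const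

private theorem lmq_smul (α e : X × StrongDual ℝ X) (c : ℝ) : lmq α (c • e) = c * lmq α e := by
  simp [lmq, Prod.smul_fst, Prod.smul_snd, map_smul, ContinuousLinearMap.smul_apply]; ring

private theorem lmq_add' (α e e' : X × StrongDual ℝ X) : lmq α (e + e') = lmq α e + lmq α e' := by
  simp [lmq, Prod.fst_add, Prod.snd_add, map_add, ContinuousLinearMap.add_apply]; ring

set_option maxHeartbeats 2000000 in
private theorem umm_step [CompleteSpace X] {A : Set (X × StrongDual ℝ X)} (hA : IsUltraMaxMonotone A)
    (ε P Q : ℝ) (hε : 0 < ε) (hP : 0 < P) (hQ : 0 < Q)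
    (z₀ : X × StrongDual ℝ X) (h₀ : ∀ α ∈ A, lfq α z₀ ≤ prq z₀ + ε) :
    ∃ z₁ : X × StrongDual ℝ X, ‖z₁.1 - z₀.1‖ ≤ P ∧ ‖z₁.2 - z₀.2‖ ≤ Q ∧
      ∀ α ∈ A, lfq α z₁ ≤ prq z₁ + ε^2/(P*Q) := by
  obtain ⟨α₀, hα₀⟩ := umm_nonempty hA
  have hPQ : 0 < ε^2/(P*Q) := by positivity
  set T : ℝ := ε + 1 with hT
  -- continuity facts
  have hcpr : Continuous (prq : X × StrongDual ℝ X → ℝ) := by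
    have := (isBoundedBilinearMap_apply (𝕜 := ℝ) (E := X) (F := ℝ)).continuous
    exact this.comp (continuous_snd.prodMk continuous_fst)
  have hclf : ∀ α : X × StrongDual ℝ X, Continuous fun z : X × StrongDual ℝ X => lfq α z := by
    intro α
    have h1 : Continuous fun z : X × StrongDual ℝ X => α.2 z.1 := α.2.continuous.comp continuous_fst
    have h2 : Continuous fun z : X × StrongDual ℝ X => z.2 α.1 := by
      have := (isBoundedBilinearMap_apply (𝕜 := ℝ) (E := X) (F := ℝ)).continuous
      exact this.comp (continuous_snd.prodMk continuous_const)
    exact (h1.add h2).sub continuous_const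
  -- the (truncated) gap function
  set tset : (X × StrongDual ℝ X) → Set ℝ :=
    fun z => insert (0:ℝ) ((fun α => min (lfq α z - prq z) T) '' A) with htset
  have htne : ∀ z, (tset z).Nonempty := fun z => ⟨0, mem_insert _ _⟩
  have htbdd : ∀ z, BddAbove (tset z) := by
    intro z
    refine ⟨max 0 T, ?_⟩
    rintro r (rfl | ⟨α, hα, rfl⟩)
    · exact le_max_left _ _
    · exact le_trans (min_le_right _ _) (le_max_right _ _)
  set f : (X × StrongDual ℝ X) → ℝ := fun z => sSup (tset z) with hf
  have hf0 : ∀ z, 0 ≤ f z := fun z => le_csSup (htbdd z) (mem_insert _ _)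
  have hfle : ∀ z c, 0 ≤ c → (∀ α ∈ A, min (lfq α z - prq z) T ≤ c) → f z ≤ c := by
    intro z c hc h
    refine csSup_le (htne z) ?_
    rintro r (rfl | ⟨α, hα, rfl⟩)
    · exact hc
    · exact h α hα
  have hfge : ∀ z, ∀ α ∈ A, min (lfq α z - prq z) T ≤ f z :=
    fun z α hα => le_csSup (htbdd z) (mem_insert_of_mem _ ⟨α, hα, rfl⟩)
  have hlsc : LowerSemicontinuous f := by
    intro z y hy
    obtain ⟨r, hr, hyr⟩ := exists_lt_of_lt_csSup (htne z) hy
    rcases hr with rfl | ⟨α, hα, rfl⟩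
    · exact Eventually.of_forall fun w => lt_of_lt_of_le hyr (hf0 w)
    · have hc : Continuous fun w : X × StrongDual ℝ X => min (lfq α w - prq w) T :=
        ((hclf α).sub hcpr).min continuous_const
      have hev : ∀ᶠ w in 𝓝 z, y < min (lfq α w - prq w) T :=
        (hc.continuousAt (x := z)).eventually_mem (Ioi_mem_nhds hyr) |>.mono (fun w hw => hw)
      exact hev.mono fun w hw => lt_of_lt_of_le hw (hfge w α hα)
  -- scaling map
  set Φ : (X × StrongDual ℝ X) → (X × StrongDual ℝ X) := fun w => (P • w.1, Q • w.2) with hΦ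
  have hΦcont : Continuous Φ :=
    (continuous_fst.const_smul P).prodMk (continuous_snd.const_smul Q)
  have hlsc' : LowerSemicontinuous (f ∘ Φ) := by
    intro w y hy
    exact (hΦcont.tendsto w).eventually (hlsc (Φ w) y hy)
  set z₀' : X × StrongDual ℝ X := (P⁻¹ • z₀.1, Q⁻¹ • z₀.2) with hz₀'
  have hΦz₀ : Φ z₀' = z₀ := by
    simp only [hΦ, hz₀']
    rw [smul_inv_smul₀ hP.ne', smul_inv_smul₀ hQ.ne']
  have hfz₀ : f z₀ ≤ ε := by
    refine hfle z₀ ε hε.le fun α hα => le_trans (min_le_left _ _) (by linarith [h₀ α hα])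
  obtain ⟨wb, hE1, hE2, hE3⟩ := umm_ekeland (f ∘ Φ) hlsc' (fun z => hf0 _) ε hε z₀'
  simp only [Function.comp_apply] at hE1 hE2 hE3
  rw [hΦz₀] at hE1 hE2
  set zb : X × StrongDual ℝ X := Φ wb with hzb
  have hE1' : f zb ≤ ε := le_trans hE1 hfz₀
  have hdist : dist wb z₀' ≤ 1 := by
    have h1 := le_trans hE2 hfz₀
    nlinarith [dist_nonneg (x := wb) (y := z₀')]
  have hmove1 : ‖zb.1 - z₀.1‖ ≤ P := by
    have h1 : dist wb.1 z₀'.1 ≤ 1 := le_trans (by rw [Prod.dist_eq]; exact le_max_left _ _) hdist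
    have h2 : zb.1 - z₀.1 = P • (wb.1 - z₀'.1) := by
      show P • wb.1 - z₀.1 = P • (wb.1 - P⁻¹ • z₀.1)
      rw [smul_sub, smul_inv_smul₀ hP.ne']
    rw [h2, norm_smul, Real.norm_eq_abs, abs_of_pos hP]
    rw [dist_eq_norm] at h1
    nlinarith
  have hmove2 : ‖zb.2 - z₀.2‖ ≤ Q := by
    have h1 : dist wb.2 z₀'.2 ≤ 1 := le_trans (by rw [Prod.dist_eq]; exact le_max_right _ _) hdist
    have h2 : zb.2 - z₀.2 = Q • (wb.2 - z₀'.2) := by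
      show Q • wb.2 - z₀.2 = Q • (wb.2 - Q⁻¹ • z₀.2)
      rw [smul_sub, smul_inv_smul₀ hQ.ne']
    rw [h2, norm_smul, Real.norm_eq_abs, abs_of_pos hQ]
    rw [dist_eq_norm] at h1
    nlinarith
  -- weighted seminorm
  set mw : (X × StrongDual ℝ X) → ℝ := fun e => max (‖e.1‖/P) (‖e.2‖/Q) with hmw
  have hmw0 : ∀ e, 0 ≤ mw e := fun e => le_trans (by positivity) (le_max_left _ _)
  have hmw_zero : mw 0 = 0 := by simp [hmw]
  have hmaxmul : ∀ (c a b : ℝ), 0 ≤ c → max (c*a) (c*b) = c * max a b := by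
    intro c a b hc
    rcases le_total a b with h|h
    · rw [max_eq_right h, max_eq_right (mul_le_mul_of_nonneg_left h hc)]
    · rw [max_eq_left h, max_eq_left (mul_le_mul_of_nonneg_left h hc)]
  have hmw_add : ∀ e e', mw (e + e') ≤ mw e + mw e' := by
    intro e e'
    refine max_le ?_ ?_
    · have h1 : ‖(e+e').1‖ ≤ ‖e.1‖ + ‖e'.1‖ := by
        rw [Prod.fst_add]; exact norm_add_le _ _
      calc ‖(e+e').1‖/P ≤ (‖e.1‖ + ‖e'.1‖)/P := (div_le_div_iff_of_pos_right hP).2 h1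
        _ = ‖e.1‖/P + ‖e'.1‖/P := add_div _ _ _
        _ ≤ mw e + mw e' := add_le_add (le_max_left _ _) (le_max_left _ _)
    · have h1 : ‖(e+e').2‖ ≤ ‖e.2‖ + ‖e'.2‖ := by
        rw [Prod.snd_add]; exact norm_add_le _ _
      calc ‖(e+e').2‖/Q ≤ (‖e.2‖ + ‖e'.2‖)/Q := (div_le_div_iff_of_pos_right hQ).2 h1
        _ = ‖e.2‖/Q + ‖e'.2‖/Q := add_div _ _ _
        _ ≤ mw e + mw e' := add_le_add (le_max_right _ _) (le_max_right _ _)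
  have hmw_smul : ∀ (c : ℝ), 0 ≤ c → ∀ e, mw (c • e) = c * mw e := by
    intro c hc e
    simp only [hmw, Prod.smul_fst, Prod.smul_snd, norm_smul, Real.norm_eq_abs, abs_of_nonneg hc]
    rw [mul_div_assoc, mul_div_assoc, hmaxmul _ _ _ hc]
  have hmw_neg : ∀ e, mw (-e) = mw e := by
    intro e; simp [hmw]
  -- Ekeland inequality in weighted form
  have KEYEK : ∀ (e : X × StrongDual ℝ X) (t : ℝ), 0 ≤ t →
      f zb ≤ f (zb + t • e) + ε * (t * mw e) := by
    intro e t ht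
    have := hE3 (wb + t • (P⁻¹ • e.1, Q⁻¹ • e.2))
    have h1 : P • (t • (P⁻¹ • e.1)) = t • e.1 := by
      rw [smul_comm P t, smul_inv_smul₀ hP.ne']
    have h2 : Q • (t • (Q⁻¹ • e.2)) = t • e.2 := by
      rw [smul_comm Q t, smul_inv_smul₀ hQ.ne']
    have hΦw : Φ (wb + t • (P⁻¹ • e.1, Q⁻¹ • e.2)) = zb + t • e := by
      show (P • (wb + t • (P⁻¹ • e.1, Q⁻¹ • e.2)).1, Q • (wb + t • (P⁻¹ • e.1, Q⁻¹ • e.2)).2)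
        = zb + t • e
      simp only [Prod.fst_add, Prod.snd_add, Prod.smul_fst, Prod.smul_snd, smul_add, h1, h2]
      rfl
    rw [hΦw] at this
    have hd : dist (wb + t • (P⁻¹ • e.1, Q⁻¹ • e.2)) wb = t * mw e := by
      rw [dist_eq_norm, add_sub_cancel_left, norm_smul, Real.norm_eq_abs, abs_of_nonneg ht]
      have h3 : ‖(P⁻¹ • e.1, Q⁻¹ • e.2)‖ = mw e := by
        rw [Prod.norm_def]
        simp only [norm_smul, Real.norm_eq_abs, abs_of_pos (inv_pos.2 hP),
          abs_of_pos (inv_pos.2 hQ), hmw]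
        rw [inv_mul_eq_div, inv_mul_eq_div]
      rw [h3]
    rw [hd] at this
    exact this
  clear hE3 hE2 hE1 hdist hΦz₀ hlsc' hfz₀ hlsc
  -- hbar : the value of the (untruncated) sup at zb
  have hub : ∀ α ∈ A, lfq α zb - prq zb ≤ ε := by
    intro α hα
    have h1 := le_trans (hfge zb α hα) hE1'
    rcases min_cases (lfq α zb - prq zb) T with ⟨heq, -⟩ | ⟨heq, hlt⟩
    · rw [heq] at h1; exact h1
    · rw [heq] at h1; exfalso; rw [hT] at h1; linarith
  set hbar : ℝ := sSup ((fun α => lfq α zb) '' A) with hhbar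
  have hbarne : ((fun α => lfq α zb) '' A).Nonempty := ⟨_, α₀, hα₀, rfl⟩
  have hbarbdd : BddAbove ((fun α => lfq α zb) '' A) := by
    refine ⟨prq zb + ε, ?_⟩
    rintro r ⟨α, hα, rfl⟩
    linarith [hub α hα]
  have hbar_ub : ∀ α ∈ A, lfq α zb ≤ hbar := fun α hα => le_csSup hbarbdd ⟨α, hα, rfl⟩
  have hbar_le : hbar ≤ prq zb + ε := csSup_le hbarne (by rintro r ⟨α, hα, rfl⟩; linarith [hub α hα])
  have hbar_ge : prq zb ≤ hbar := umm_ni' hA zb hbar hbar_ub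
  by_cases hcase : hbar ≤ prq zb
  · exact ⟨zb, hmove1, hmove2, fun α hα => by linarith [hbar_ub α hα]⟩
  push_neg at hcase
  -- f zb = hbar - prq zb
  have hfzb : f zb = hbar - prq zb := by
    refine le_antisymm (hfle zb _ (by linarith) ?_) ?_
    · intro α hα
      refine le_trans (min_le_left _ _) (by linarith [hbar_ub α hα])
    · have h1 : ∀ α ∈ A, lfq α zb - prq zb ≤ f zb := by
        intro α hα
        have h2 := hfge zb α hα
        rw [min_eq_left (by rw [hT]; linarith [hub α hα])] at h2
        exact h2
      have h3 : hbar ≤ f zb + prq zb :=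
        csSup_le hbarne (by rintro r ⟨α, hα, rfl⟩; linarith [h1 α hα])
      linarith
  -- linear part of pairing at zb
  set Lf : (X × StrongDual ℝ X) → ℝ := fun e => zb.2 e.1 + e.2 zb.1 with hLf
  have hLf_smul : ∀ (c : ℝ) (e), Lf (c • e) = c * Lf e := by
    intro c e
    simp [hLf, Prod.smul_fst, Prod.smul_snd, map_smul, ContinuousLinearMap.smul_apply]; ring
  have hLf_add : ∀ e e', Lf (e + e') = Lf e + Lf e' := by
    intro e e'
    simp [hLf, Prod.fst_add, Prod.snd_add, map_add, ContinuousLinearMap.add_apply]; ring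
  -- KEY1 : directional lower estimate from Ekeland
  have KEY1 : ∀ (e : X × StrongDual ℝ X) (H : ℝ), (∀ α ∈ A, lfq α (zb + e) ≤ H) →
      hbar + Lf e - ε * mw e ≤ H := by
    intro e H hH
    by_contra hc
    push_neg at hc
    set η : ℝ := hbar + Lf e - ε * mw e - H with hη
    have hηpos : 0 < η := by simp only [hη]; linarith
    set q : ℝ := e.2 e.1 with hq
    have hfpos : 0 < f zb := by rw [hfzb]; linarith
    set t : ℝ := min 1 (min (η/(|q|+1)) ((f zb)/(ε * mw e + 1))) with htdef
    have habs : 0 ≤ |q| := abs_nonneg q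
    have ht0 : 0 < t := by
      refine lt_min one_pos (lt_min (by positivity) (by positivity))
    have ht1 : t ≤ 1 := min_le_left _ _
    have htq : t * |q| < η := by
      have h1 : t ≤ η/(|q|+1) := le_trans (min_le_right _ _) (min_le_left _ _)
      have h2 : t * (|q|+1) ≤ η := by
        rw [← le_div_iff₀ (by positivity)]; exact h1
      nlinarith
    have htmw : ε * (t * mw e) < f zb := by
      have h1 : t ≤ (f zb)/(ε * mw e + 1) := le_trans (min_le_right _ _) (min_le_right _ _)
      have h2 : t * (ε * mw e + 1) ≤ f zb := by
        rw [← le_div_iff₀ (by positivity)]; exact h1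
      nlinarith [hmw0 e, hε.le, mul_pos ht0 (mul_pos hε (lt_of_lt_of_le zero_lt_one le_rfl))]
    set Mt : ℝ := (1-t)*hbar + t*H - prq (zb + t • e) with hMt
    have hfup : f (zb + t • e) ≤ max 0 Mt := by
      refine hfle _ _ (le_max_left _ _) ?_
      intro α hα
      refine le_trans (min_le_left _ _) (le_trans ?_ (le_max_right _ _))
      have h1 : lfq α (zb + t • e) = lfq α zb + t * lmq α e := lfq_smul_line α zb e t
      have h2 : lfq α (zb + e) = lfq α zb + lmq α e := lfq_add α zb e
      have h3 : lmq α e ≤ H - lfq α zb := by linarith [hH α hα]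
      have h4 : lfq α zb ≤ hbar := hbar_ub α hα
      simp only [hMt]
      nlinarith
    have hEk := KEYEK e t ht0.le
    have hprql : prq (zb + t • e) = prq zb + t * Lf e + t^2 * q := prq_smul_line zb e t
    have hMteval : Mt = f zb - t*(ε * mw e + η) - t^2 * q := by
      simp only [hMt, hprql, hfzb, hη]
      ring
    rcases le_or_gt Mt 0 with hM | hM
    · rw [max_eq_left hM] at hfup
      linarith
    · rw [max_eq_right hM.le] at hfup
      have h5 : t*η + t^2*q ≤ 0 := by nlinarith
      have h8 : 0 ≤ q + |q| := by linarith [neg_abs_le q]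
      have h9 : 0 ≤ t^2 * (q + |q|) := by positivity
      have h7 : t * (t*|q|) < t * η := mul_lt_mul_of_pos_left htq ht0
      nlinarith
  -- the sublinear functional
  set SS : (X × StrongDual ℝ X) → Set ℝ := fun d => {r | ∃ t : ℝ, 0 < t ∧ ∃ d' : X × StrongDual ℝ X,
    ∀ α ∈ A, t * (lfq α zb - hbar) + (lmq α (d - d') - Lf (d - d')) ≤ r - ε * mw d'} with hSS
  have hw1 : ∀ d, ε * mw d ∈ SS d := by
    intro d
    refine ⟨1, one_pos, d, fun α hα => ?_⟩
    have h0 : lmq α (d - d) = 0 := by rw [sub_self]; simp [lmq]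
    have h0' : Lf (d - d) = 0 := by rw [sub_self]; simp [hLf]
    rw [h0, h0']
    have := hbar_ub α hα
    linarith
  have hw2 : ∀ d r, r ∈ SS d → -(ε * mw d) ≤ r := by
    intro d r hr
    obtain ⟨t, ht, d', hc⟩ := hr
    set e : X × StrongDual ℝ X := t⁻¹ • (d - d') with he
    have hKey := KEY1 e (hbar + (r - ε * mw d' + Lf (d - d'))/t) ?_
    · have hLfe : Lf e = t⁻¹ * Lf (d - d') := hLf_smul t⁻¹ (d - d')
      have hmwe : mw e = t⁻¹ * mw (d - d') := hmw_smul t⁻¹ (by positivity) (d - d')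
      have hmm : mw (d - d') ≤ mw d + mw d' := by
        have := hmw_add d (-d')
        rw [hmw_neg d'] at this
        simpa [sub_eq_add_neg] using this
      rw [hLfe, hmwe] at hKey
      have ht' : 0 < t⁻¹ := by positivity
      have h2 : t * (t⁻¹ * Lf (d-d') - ε * (t⁻¹ * mw (d-d'))) ≤
          t * ((r - ε * mw d' + Lf (d - d'))/t) := by
        apply mul_le_mul_of_nonneg_left _ ht.le
        linarith
      rw [mul_div_cancel₀ _ ht.ne'] at h2
      have h3 : t * (t⁻¹ * Lf (d-d')) = Lf (d-d') := by
        field_simp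
      have h4 : t * (ε * (t⁻¹ * mw (d-d'))) = ε * mw (d-d') := by
        field_simp
      rw [mul_sub, h3, h4] at h2
      nlinarith [hmw0 d', hε.le, hmw0 d]
    · intro α hα
      have h1 : lfq α (zb + e) = lfq α zb + t⁻¹ * lmq α (d - d') := by
        rw [he, ← lfq_smul_line α zb (d - d') t⁻¹]
      rw [h1]
      have h5 := hc α hα
      have h6 : t⁻¹ * (t * (lfq α zb - hbar) + (lmq α (d - d') - Lf (d - d'))) ≤
          t⁻¹ * (r - ε * mw d') := mul_le_mul_of_nonneg_left h5 (by positivity)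
      have h7 : t⁻¹ * (t * (lfq α zb - hbar)) = lfq α zb - hbar := by
        field_simp
      rw [mul_add, h7] at h6
      rw [div_eq_inv_mul]
      nlinarith
  have hSSne : ∀ d, (SS d).Nonempty := fun d => ⟨_, hw1 d⟩
  have hSSbdd : ∀ d, BddBelow (SS d) := fun d => ⟨-(ε * mw d), fun r hr => hw2 d r hr⟩
  set sfun : (X × StrongDual ℝ X) → ℝ := fun d => sInf (SS d) with hsfun
  have hs_le : ∀ d, sfun d ≤ ε * mw d := fun d => csInf_le (hSSbdd d) (hw1 d)
  have hs_ge : ∀ d, -(ε * mw d) ≤ sfun d := fun d => le_csInf (hSSne d) (fun r hr => hw2 d r hr)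
  have hs_add : ∀ d e, sfun (d + e) ≤ sfun d + sfun e := by
    intro d e
    have hmem : ∀ r ∈ SS d, ∀ r' ∈ SS e, r + r' ∈ SS (d + e) := by
      rintro r ⟨t, ht, d', hcd⟩ r' ⟨t', ht', e', hce⟩
      refine ⟨t + t', by positivity, d' + e', fun α hα => ?_⟩
      have h1 := hcd α hα
      have h2 := hce α hα
      have h3 : d + e - (d' + e') = (d - d') + (e - e') := by abel
      rw [h3, lmq_add', hLf_add]
      have h4 : mw (d' + e') ≤ mw d' + mw e' := hmw_add d' e'
      nlinarith [hε.le]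
    have h1 : ∀ r ∈ SS d, ∀ r' ∈ SS e, sfun (d+e) ≤ r + r' :=
      fun r hr r' hr' => csInf_le (hSSbdd _) (hmem r hr r' hr')
    have h2 : ∀ r ∈ SS d, sfun (d+e) - r ≤ sfun e := by
      intro r hr
      refine le_csInf (hSSne e) (fun r' hr' => by linarith [h1 r hr r' hr'])
    have h3 : sfun (d+e) - sfun e ≤ sfun d := by
      refine le_csInf (hSSne d) (fun r hr => by linarith [h2 r hr])
    linarith
  have hs_smul : ∀ (c : ℝ), 0 < c → ∀ d, sfun (c • d) = c * sfun d := by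
    have hsc : ∀ (c : ℝ), 0 < c → ∀ d r, r ∈ SS d → c * r ∈ SS (c • d) := by
      rintro c hc d r ⟨t, ht, d', hcd⟩
      refine ⟨c * t, by positivity, c • d', fun α hα => ?_⟩
      have h1 : c • d - c • d' = c • (d - d') := (smul_sub c d d').symm
      rw [h1, lmq_smul, hLf_smul, hmw_smul c hc.le d']
      have h2 := hcd α hα
      nlinarith
    have hle : ∀ (c : ℝ), 0 < c → ∀ d, sfun (c • d) ≤ c * sfun d := by
      intro c hc d
      have h1 : ∀ r ∈ SS d, sfun (c • d) ≤ c * r :=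
        fun r hr => csInf_le (hSSbdd _) (hsc c hc d r hr)
      have h2 : c⁻¹ * sfun (c • d) ≤ sfun d := by
        refine le_csInf (hSSne d) (fun r hr => ?_)
        have := h1 r hr
        rw [inv_mul_le_iff₀ hc]
        linarith [this]
      calc sfun (c • d) = c * (c⁻¹ * sfun (c • d)) := by field_simp
        _ ≤ c * sfun d := mul_le_mul_of_nonneg_left h2 hc.le
    intro c hc d
    refine le_antisymm (hle c hc d) ?_
    have := hle c⁻¹ (by positivity) (c • d)
    rw [inv_smul_smul₀ hc.ne'] at this
    calc c * sfun d ≤ c * (c⁻¹ * sfun (c • d)) := mul_le_mul_of_nonneg_left this hc.le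
      _ = sfun (c • d) := by field_simp
  -- Hahn-Banach
  have hs0 : sfun 0 = 0 := by
    have h1 := hs_le 0
    have h2 := hs_ge 0
    rw [hmw_zero] at h1 h2
    simp at h1 h2
    linarith
  obtain ⟨g, -, hg⟩ := exists_extension_of_le_sublinear
    (⟨⊥, 0⟩ : (X × StrongDual ℝ X) →ₗ.[ℝ] ℝ) sfun
    (fun c hc x => hs_smul c hc x)
    (fun x y => hs_add x y)
    (fun x => by
      have hx0 : (x : X × StrongDual ℝ X) = 0 := (Submodule.mem_bot ℝ).mp x.2
      rw [hx0, hs0]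
      exact le_of_eq rfl)
  -- continuous components of g
  have hgb1 : ∀ u : X, |g (u, (0 : StrongDual ℝ X))| ≤ ε/P * ‖u‖ := by
    intro u
    have h1 : g (u, (0 : StrongDual ℝ X)) ≤ ε/P * ‖u‖ := by
      refine le_trans (hg (u, 0)) (le_trans (hs_le _) ?_)
      have : mw (u, (0 : StrongDual ℝ X)) = ‖u‖/P := by
        simp only [hmw]
        rw [norm_zero, zero_div, max_eq_left (by positivity)]
      rw [this]; ring_nf; rfl
    have h2 : g (-u, (0 : StrongDual ℝ X)) ≤ ε/P * ‖u‖ := by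
      have h3 := le_trans (hg (-u, 0)) (hs_le _)
      have : mw (-u, (0 : StrongDual ℝ X)) = ‖u‖/P := by
        simp only [hmw]
        rw [norm_zero, zero_div, norm_neg, max_eq_left (by positivity)]
      rw [this] at h3
      calc g (-u, (0 : StrongDual ℝ X)) ≤ ε * (‖u‖/P) := h3
        _ = ε/P * ‖u‖ := by ring
    have h4 : g (-u, (0 : StrongDual ℝ X)) = - g (u, (0 : StrongDual ℝ X)) := by
      have : ((-u, (0 : StrongDual ℝ X)) : X × StrongDual ℝ X) = -(u, (0 : StrongDual ℝ X)) := by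
        simp [Prod.ext_iff]
      rw [this, map_neg]
    rw [h4] at h2
    rw [abs_le]
    constructor <;> [linarith; linarith [le_trans (hg (u,0)) (hs_le (u, (0:StrongDual ℝ X)))]]
  have hgb2 : ∀ u : StrongDual ℝ X, |g ((0 : X), u)| ≤ ε/Q * ‖u‖ := by
    intro u
    have h1 : g ((0 : X), u) ≤ ε * (‖u‖/Q) := by
      refine le_trans (hg (0, u)) (le_trans (hs_le _) ?_)
      have : mw ((0 : X), u) = ‖u‖/Q := by
        simp only [hmw]
        rw [norm_zero, zero_div, max_eq_right (by positivity)]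
      rw [this]
    have h2 : g ((0 : X), -u) ≤ ε * (‖u‖/Q) := by
      have h3 := le_trans (hg (0, -u)) (hs_le _)
      have : mw ((0 : X), -u) = ‖u‖/Q := by
        simp only [hmw]
        rw [norm_zero, zero_div, norm_neg, max_eq_right (by positivity)]
      rw [this] at h3
      exact h3
    have h4 : g ((0:X), -u) = - g ((0:X), u) := by
      have : (((0:X), -u) : X × StrongDual ℝ X) = -((0:X), u) := by
        simp [Prod.ext_iff]
      rw [this, map_neg]
    rw [h4] at h2
    rw [abs_le]
    constructor
    · linarith [(by ring : ε * (‖u‖/Q) = ε/Q * ‖u‖)]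
    · calc g ((0:X), u) ≤ ε * (‖u‖/Q) := h1
        _ = ε/Q * ‖u‖ := by ring
  set v₁ : StrongDual ℝ X := LinearMap.mkContinuous (g.comp (LinearMap.inl ℝ X (StrongDual ℝ X))) (ε/P)
    (fun u => by
      simp only [LinearMap.coe_comp, Function.comp_apply, LinearMap.inl_apply,
        Real.norm_eq_abs]
      exact hgb1 u) with hv₁
  set v₂ : StrongDual ℝ (StrongDual ℝ X) := LinearMap.mkContinuous
    (g.comp (LinearMap.inr ℝ X (StrongDual ℝ X))) (ε/Q)
    (fun u => by
      simp only [LinearMap.coe_comp, Function.comp_apply, LinearMap.inr_apply,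
        Real.norm_eq_abs]
      exact hgb2 u) with hv₂
  have hv₁app : ∀ u : X, v₁ u = g (u, 0) := fun u => rfl
  have hv₂app : ∀ u : StrongDual ℝ X, v₂ u = g (0, u) := fun u => rfl
  have hv₁norm : ‖v₁‖ ≤ ε/P :=
    LinearMap.mkContinuous_norm_le _ (by positivity) _
  have hv₂norm : ‖v₂‖ ≤ ε/Q :=
    LinearMap.mkContinuous_norm_le _ (by positivity) _
  have hgsplit : ∀ d : X × StrongDual ℝ X, g d = v₁ d.1 + v₂ d.2 := by
    intro d
    rw [hv₁app, hv₂app, ← map_add]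
    congr 1
    simp [Prod.ext_iff]
  -- subgradient inequality at graph points
  have hsub : ∀ α ∈ A, v₁ (α.1 - zb.1) + v₂ (α.2 - zb.2) ≤ prq α - hbar - Lf (α - zb) := by
    intro α hα
    have hmem : (prq α - hbar - Lf (α - zb)) ∈ SS (α - zb) := by
      refine ⟨1, one_pos, 0, fun β hβ => ?_⟩
      have h1 : lfq β zb + lmq β (α - zb) = lfq β α := by
        have := lfq_add β zb (α - zb)
        rw [add_sub_cancel] at this
        linarith [this]
      have h2 : lfq β α ≤ prq α := umm_mono hA hα hβ
      have h3 : mw (0 : X × StrongDual ℝ X) = 0 := hmw_zero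
      simp only [sub_zero]
      rw [h3]
      nlinarith
    have h4 : g (α - zb) ≤ prq α - hbar - Lf (α - zb) :=
      le_trans (hg _) (csInf_le (hSSbdd _) hmem)
    rw [hgsplit] at h4
    have h5 : (α - zb).1 = α.1 - zb.1 := rfl
    have h6 : (α - zb).2 = α.2 - zb.2 := rfl
    rw [h5, h6] at h4
    exact h4
  -- apply NI
  set ψ : StrongDual ℝ (StrongDual ℝ X) := inclusionInDoubleDual ℝ X zb.1 + v₂ with hψ
  set y : StrongDual ℝ X := zb.2 + v₁ with hy
  have hR : ∀ α ∈ A, ψ α.2 + y α.1 - α.2 α.1 ≤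
      2 * prq zb - hbar + v₁ zb.1 + v₂ zb.2 := by
    intro α hα
    have h1 := hsub α hα
    have h2 : v₁ (α.1 - zb.1) = v₁ α.1 - v₁ zb.1 := map_sub _ _ _
    have h3 : v₂ (α.2 - zb.2) = v₂ α.2 - v₂ zb.2 := map_sub _ _ _
    have h4 : Lf (α - zb) = zb.2 α.1 - prq zb + α.2 zb.1 - prq zb := by
      simp only [hLf, Prod.fst_sub, Prod.snd_sub, map_sub, ContinuousLinearMap.sub_apply, prq]
      ring
    have h5 : ψ α.2 = α.2 zb.1 + v₂ α.2 := by
      simp only [hψ, ContinuousLinearMap.add_apply, NormedSpace.dual_def]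
    have h6 : y α.1 = zb.2 α.1 + v₁ α.1 := by
      simp only [hy, ContinuousLinearMap.add_apply]
    rw [h5, h6]
    rw [h2, h3, h4] at h1
    simp only [prq] at h1 ⊢
    linarith
  have hni := umm_ni hA ψ y _ hR
  have h7 : ψ y = prq zb + v₁ zb.1 + v₂ zb.2 + v₂ v₁ := by
    simp only [hψ, hy, ContinuousLinearMap.add_apply, NormedSpace.dual_def, map_add, prq]
    ring
  rw [h7] at hni
  have h8 : hbar - prq zb ≤ - v₂ v₁ := by linarith
  have h9 : |v₂ v₁| ≤ ε^2/(P*Q) := by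
    have h10 : ‖v₂ v₁‖ ≤ ‖v₂‖ * ‖v₁‖ := v₂.le_opNorm v₁
    have h11 : ‖v₂‖ * ‖v₁‖ ≤ (ε/Q) * (ε/P) :=
      mul_le_mul hv₂norm hv₁norm (norm_nonneg _) (by positivity)
    rw [Real.norm_eq_abs] at h10
    calc |v₂ v₁| ≤ (ε/Q) * (ε/P) := le_trans h10 h11
      _ = ε^2/(P*Q) := by ring
  refine ⟨zb, hmove1, hmove2, fun α hα => ?_⟩
  have h12 := hbar_ub α hα
  have h13 : - v₂ v₁ ≤ |v₂ v₁| := neg_le_abs _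
  linarith

set_option maxHeartbeats 1000000 in
private theorem umm_core [CompleteSpace X] {A : Set (X × StrongDual ℝ X)} (hA : IsUltraMaxMonotone A)
    (z₀ : X × StrongDual ℝ X) (ε₀ : ℝ) (h₀ : ∀ α ∈ A, lfq α z₀ ≤ prq z₀ + ε₀)
    (δ : ℝ) (hδ : 0 < δ) : ∃ b ∈ ranOp A, ‖z₀.2 - b‖ ≤ δ := by
  set G : ℝ := max ε₀ 1 with hG
  have hG1 : (1:ℝ) ≤ G := le_max_right _ _
  have hGpos : 0 < G := by linarith
  set gseq : ℕ → ℝ := fun n => G * (8⁻¹:ℝ)^n with hg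
  have hgpos : ∀ n, 0 < gseq n := fun n => by positivity
  set Qseq : ℕ → ℝ := fun n => (δ/4) * (2⁻¹:ℝ)^n with hQs
  set Pseq : ℕ → ℝ := fun n => (32*G/δ) * (4⁻¹:ℝ)^n with hPs
  have hQpos : ∀ n, 0 < Qseq n := fun n => by positivity
  have hPpos : ∀ n, 0 < Pseq n := fun n => by positivity
  have hPQ : ∀ n, (gseq n)^2 / (Pseq n * Qseq n) = gseq (n+1) := by
    intro n
    have h8 : (8⁻¹:ℝ)^n = (4⁻¹:ℝ)^n * (2⁻¹:ℝ)^n := by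
      rw [← mul_pow]; norm_num
    simp only [hg, hPs, hQs, pow_succ, h8]
    have h4 : (4⁻¹:ℝ)^n ≠ 0 := by positivity
    have h2 : (2⁻¹:ℝ)^n ≠ 0 := by positivity
    field_simp
    ring
  have hstep : ∀ (n : ℕ) (z : X × StrongDual ℝ X), (∀ α ∈ A, lfq α z ≤ prq z + gseq n) →
      ∃ z' : X × StrongDual ℝ X, (∀ α ∈ A, lfq α z' ≤ prq z' + gseq (n+1)) ∧
        ‖z'.1 - z.1‖ ≤ Pseq n ∧ ‖z'.2 - z.2‖ ≤ Qseq n := by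
    intro n z hz
    obtain ⟨z', d1, d2, hgap⟩ := umm_step hA (gseq n) (Pseq n) (Qseq n)
      (hgpos n) (hPpos n) (hQpos n) z hz
    refine ⟨z', fun α hα => ?_, d1, d2⟩
    rw [← hPQ n]
    exact hgap α hα
  choose nxt hn1 hn2 hn3 using hstep
  set seqS : ∀ n : ℕ, {z : X × StrongDual ℝ X // ∀ α ∈ A, lfq α z ≤ prq z + gseq n} :=
    fun n => Nat.rec ⟨z₀, fun α hα => by
      have h1 := h₀ α hα
      have h2 : ε₀ ≤ G := le_max_left _ _
      simp only [hg, pow_zero, mul_one]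
      linarith⟩ (fun n p => ⟨nxt n p.1 p.2, hn1 n p.1 p.2⟩) n with hseqS
  set seq : ℕ → X × StrongDual ℝ X := fun n => (seqS n).1 with hseq
  have hseq0 : seq 0 = z₀ := rfl
  have hseqsucc : ∀ n, seq (n+1) = nxt n (seq n) (seqS n).2 := fun n => rfl
  have hd1 : ∀ n, ‖(seq (n+1)).1 - (seq n).1‖ ≤ Pseq n := by
    intro n; rw [hseqsucc n]; exact hn2 n (seq n) (seqS n).2
  have hd2 : ∀ n, ‖(seq (n+1)).2 - (seq n).2‖ ≤ Qseq n := by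
    intro n; rw [hseqsucc n]; exact hn3 n (seq n) (seqS n).2
  have hsumP : Summable Pseq := by
    refine Summable.mul_left _ ?_
    exact summable_geometric_of_lt_one (by norm_num) (by norm_num)
  have hsumQ : Summable Qseq := by
    refine Summable.mul_left _ ?_
    exact summable_geometric_of_lt_one (by norm_num) (by norm_num)
  have hdistseq : ∀ n, dist (seq n) (seq (n+1)) ≤ Pseq n + Qseq n := by
    intro n
    rw [Prod.dist_eq]
    refine max_le ?_ ?_
    · rw [dist_comm, dist_eq_norm]
      linarith [hd1 n, (hQpos n).le]
    · rw [dist_comm, dist_eq_norm]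
      linarith [hd2 n, (hPpos n).le]
  have hcauchy : CauchySeq seq :=
    cauchySeq_of_dist_le_of_summable _ hdistseq (hsumP.add hsumQ)
  obtain ⟨zl, hzl⟩ := cauchySeq_tendsto_of_complete hcauchy
  have hzl2 : Tendsto (fun n => (seq n).2) atTop (𝓝 zl.2) :=
    ((continuous_snd.tendsto zl).comp hzl)
  have hd2' : ∀ n, dist ((seq n).2) ((seq (n+1)).2) ≤ Qseq n := by
    intro n; rw [dist_comm, dist_eq_norm]; exact hd2 n
  have hdist2 : dist ((seq 0).2) zl.2 ≤ ∑' n, Qseq n :=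
    dist_le_tsum_of_dist_le_of_tendsto₀ Qseq hd2' hsumQ hzl2
  have htsumQ : ∑' n, Qseq n = δ/2 := by
    rw [hQs, tsum_mul_left, tsum_geometric_of_lt_one (by norm_num) (by norm_num)]
    norm_num
    ring
  rw [hseq0, htsumQ] at hdist2
  have hgap : ∀ α ∈ A, lfq α zl ≤ prq zl := by
    intro α hα
    have h1 : ∀ n, lfq α (seq n) - prq (seq n) ≤ gseq n := by
      intro n
      linarith [(seqS n).2 α hα]
    have htend : Tendsto (fun n => lfq α (seq n) - prq (seq n)) atTop
        (𝓝 (lfq α zl - prq zl)) :=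
      (((lfq_cont α).tendsto zl).comp hzl).sub ((prq_cont.tendsto zl).comp hzl)
    have hg0 : Tendsto gseq atTop (𝓝 0) := by
      rw [hg]
      have := tendsto_pow_atTop_nhds_zero_of_lt_one (by norm_num : (0:ℝ) ≤ 8⁻¹) (by norm_num)
      simpa using this.const_mul G
    have := le_of_tendsto_of_tendsto' htend hg0 h1
    linarith
  obtain ⟨x, -, hm⟩ := hA.2 (inclusionInDoubleDual ℝ X zl.1) zl.2 (fun p hp => by
    have h1 := hgap p hp
    have h2 : (inclusionInDoubleDual ℝ X zl.1 - inclusionInDoubleDual ℝ X p.1) (zl.2 - p.2)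
        = prq zl - lfq p zl := by
      simp only [ContinuousLinearMap.sub_apply, map_sub, NormedSpace.dual_def, prq, lfq]
      ring
    rw [h2]
    linarith)
  refine ⟨zl.2, ⟨x, hm⟩, ?_⟩
  have : dist ((z₀ : X × StrongDual ℝ X).2) zl.2 = ‖z₀.2 - zl.2‖ := dist_eq_norm _ _
  linarith [this ▸ hdist2]

end UMMAux

theorem stmt2 [CompleteSpace X] (A : Set (X × StrongDual ℝ X)) (hA : IsUltraMaxMonotone A) :
    closure (ranOp A) = closure (convexHull ℝ (ranOp A)) ∧
    closure (ranOp A) = closure (Prod.snd '' {q : X × StrongDual ℝ X | fitz A q < ⊤}) ∧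
    closure (ranOp A) =
      closure (Prod.snd '' {q : StrongDual ℝ (StrongDual ℝ X) × StrongDual ℝ X | phiFitz A q < ⊤}) := by
  have hne := umm_nonempty hA
  have hranDF : ranOp A ⊆ Prod.snd '' {q : X × StrongDual ℝ X | fitz A q < ⊤} := by
    rintro xs ⟨x, hxA⟩
    exact ⟨(x, xs), fitz_lt_top (fun α hα => umm_mono hA hxA hα), rfl⟩
  have hDFconv : Convex ℝ {q : X × StrongDual ℝ X | fitz A q < ⊤} := by
    intro q1 h1 q2 h2 a b ha hb hab
    obtain ⟨r1, hr1⟩ := fitz_bound hne h1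
    obtain ⟨r2, hr2⟩ := fitz_bound hne h2
    refine fitz_lt_top (r := a*r1 + b*r2) (fun α hα => ?_)
    have e : lfq α (a • q1 + b • q2) = a * lfq α q1 + b * lfq α q2 := by
      simp only [lfq, Prod.fst_add, Prod.snd_add, Prod.smul_fst, Prod.smul_snd, map_add,
        map_smul, ContinuousLinearMap.add_apply, ContinuousLinearMap.smul_apply, smul_eq_mul]
      linear_combination (α.2 α.1) * hab
    rw [e]
    have := hr1 α hα
    have := hr2 α hα
    nlinarith
  have hconvDF : convexHull ℝ (ranOp A) ⊆
      Prod.snd '' {q : X × StrongDual ℝ X | fitz A q < ⊤} := by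
    refine convexHull_min hranDF ?_
    have := hDFconv.linear_image (LinearMap.snd ℝ X (StrongDual ℝ X))
    exact this
  have hDFtoPhi : Prod.snd '' {q : X × StrongDual ℝ X | fitz A q < ⊤} ⊆
      Prod.snd '' {q : StrongDual ℝ (StrongDual ℝ X) × StrongDual ℝ X | phiFitz A q < ⊤} := by
    rintro xs ⟨⟨x, xs'⟩, hq, rfl⟩
    refine ⟨(inclusionInDoubleDual ℝ X x, xs'), ?_, rfl⟩
    have heq : phiFitz A (inclusionInDoubleDual ℝ X x, xs') = fitz A (x, xs') := by
      unfold phiFitz fitz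
      refine iSup_congr fun p => ?_
      rw [NormedSpace.dual_def]
    rw [mem_setOf_eq, heq]
    exact hq
  have hcore : Prod.snd '' {q : X × StrongDual ℝ X | fitz A q < ⊤} ⊆ closure (ranOp A) := by
    rintro xs ⟨q, hq, rfl⟩
    rw [Metric.mem_closure_iff]
    intro δ hδ
    obtain ⟨r, hr⟩ := fitz_bound hne hq
    obtain ⟨b, hb, hdist⟩ := umm_core hA q (r - prq q) (fun α hα => by linarith [hr α hα])
      (δ/2) (by linarith)
    refine ⟨b, hb, ?_⟩
    rw [dist_eq_norm]
    linarith
  have hsep : Prod.snd '' {q : StrongDual ℝ (StrongDual ℝ X) × StrongDual ℝ X | phiFitz A q < ⊤} ⊆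
      closure (convexHull ℝ (ranOp A)) := by
    rintro xs ⟨⟨ψ, xs'⟩, hq, rfl⟩
    by_contra hout
    have hCco : Convex ℝ (closure (convexHull ℝ (ranOp A))) :=
      (convex_convexHull ℝ _).closure
    obtain ⟨fℓ, u, hfu, hux⟩ :=
      geometric_hahn_banach_closed_point hCco isClosed_closure hout
    obtain ⟨r, hr⟩ := phiFitz_bound hne hq
    have hkey : ∀ t : ℝ, 0 < t → ψ xs' + t * (fℓ xs') ≤ r + t * u := by
      intro t ht
      have h1 := umm_ni hA (ψ + t • fℓ) xs' (r + t * u) (fun α hα => by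
        have h2 := hr α hα
        have h3 : α.2 ∈ closure (convexHull ℝ (ranOp A)) :=
          subset_closure (subset_convexHull ℝ _ ⟨α.1, hα⟩)
        have h4 : fℓ α.2 < u := hfu α.2 h3
        simp only [ContinuousLinearMap.add_apply, ContinuousLinearMap.smul_apply, smul_eq_mul]
        nlinarith)
      simpa [ContinuousLinearMap.add_apply, ContinuousLinearMap.smul_apply, smul_eq_mul]
        using h1
    have hcpos : 0 < fℓ xs' - u := by simp only [Prod.snd] at hux ⊢; linarith
    set t := max 1 ((r - ψ xs')/(fℓ xs' - u) + 1) with htdef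
    have ht1 : 0 < t := lt_of_lt_of_le one_pos (le_max_left _ _)
    have ht2 : (r - ψ xs')/(fℓ xs' - u) + 1 ≤ t := le_max_right _ _
    have h6 := hkey t ht1
    have h5 : t * (fℓ xs' - u) ≤ r - ψ xs' := by nlinarith
    have h7 : (r - ψ xs')/(fℓ xs' - u) < t := by linarith
    rw [div_lt_iff₀ hcpos] at h7
    linarith
  have i1 : closure (ranOp A) ⊆ closure (convexHull ℝ (ranOp A)) :=
    closure_mono (subset_convexHull ℝ _)
  have i2 : closure (convexHull ℝ (ranOp A)) ⊆
      closure (Prod.snd '' {q : X × StrongDual ℝ X | fitz A q < ⊤}) := closure_mono hconvDF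
  have i3 : closure (Prod.snd '' {q : X × StrongDual ℝ X | fitz A q < ⊤}) ⊆
      closure (Prod.snd '' {q : StrongDual ℝ (StrongDual ℝ X) × StrongDual ℝ X | phiFitz A q < ⊤}) :=
    closure_mono hDFtoPhi
  have i4 : closure (Prod.snd '' {q : StrongDual ℝ (StrongDual ℝ X) × StrongDual ℝ X | phiFitz A q < ⊤}) ⊆
      closure (convexHull ℝ (ranOp A)) := closure_minimal hsep isClosed_closure
  have i5 : closure (Prod.snd '' {q : X × StrongDual ℝ X | fitz A q < ⊤}) ⊆ closure (ranOp A) :=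
    closure_minimal hcore isClosed_closure
  have e1 : closure (ranOp A) = closure (convexHull ℝ (ranOp A)) :=
    Set.Subset.antisymm i1 (Set.Subset.trans i2 i5)
  refine ⟨e1, Set.Subset.antisymm (Set.Subset.trans i1 i2) i5, ?_⟩
  exact Set.Subset.antisymm (Set.Subset.trans (Set.Subset.trans i1 i2) i3)
    (Set.Subset.trans i4 e1.symm.subset)
end

section
/- Let X be a real Banach space, let A, B : X ⇉ X* be maximally monotone, and assume that ⋃_{λ>0} λ(dom A − dom B) is a closed linear subspace of X. Set E := {x ∈ X : there exists x* ∈ X* with F_A*(x*, x̂) < +∞} and F := {x ∈ X : there exists x* ∈ X* with F_B*(x*, x̂) < +∞}, where F_A* denotes the Fenchel conjugate of the Fitzpatrick function F_A. Then ⋃_{λ>0} λ(dom A − dom B) = ⋃_{λ>0} λ(E − F). -/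
open Pointwise Set NormedSpace

variable {X : Type*} [NormedAddCommGroup X] [NormedSpace ℝ X]

lemma maxMono_nonempty' {A : Set (X × StrongDual ℝ X)} (hA : IsMaxMonotone A) : A.Nonempty := by
  by_contra h
  rw [Set.not_nonempty_iff_eq_empty] at h
  have := hA.2 0 0 (by simp [h])
  simp [h] at this

lemma fitzConj_lt_top_of_mem' {A : Set (X × StrongDual ℝ X)} {x : X} {xs : StrongDual ℝ X}
    (hx : (x, xs) ∈ A) : fitzConj A (xs, inclusionInDoubleDual ℝ X x) < ⊤ := by
  have hb : fitzConj A (xs, inclusionInDoubleDual ℝ X x) ≤ ((xs x : ℝ) : EReal) := by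
    apply iSup_le
    intro q
    have h1 : ((xs q.1 + q.2 x - xs x : ℝ) : EReal) ≤ fitz A q :=
      le_iSup (fun p : A => ((p.1.2 q.1 + q.2 p.1.1 - p.1.2 p.1.1 : ℝ) : EReal)) ⟨(x, xs), hx⟩
    calc ((xs q.1 + (inclusionInDoubleDual ℝ X x) q.2 : ℝ) : EReal) - fitz A q
        ≤ ((xs q.1 + q.2 x : ℝ) : EReal) - ((xs q.1 + q.2 x - xs x : ℝ) : EReal) := by
          rw [dual_def]; exact EReal.sub_le_sub le_rfl h1
      _ = ((xs x : ℝ) : EReal) := by rw [← EReal.coe_sub]; congr 1; ring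
  exact lt_of_le_of_lt hb (EReal.coe_lt_top _)

lemma mem_of_fitzConj_lt_top' {A : Set (X × StrongDual ℝ X)} (hA : IsMonotoneOp A)
    {a₀ : X} {as₀ : StrongDual ℝ X} (ha₀ : (a₀, as₀) ∈ A)
    {C : Set X} (hCc : Convex ℝ C) (hCcl : IsClosed C) (hdom : domOp A ⊆ C)
    {x : X} {xs : StrongDual ℝ X} (h : fitzConj A (xs, inclusionInDoubleDual ℝ X x) < ⊤) :
    x ∈ C := by
  by_contra hx
  obtain ⟨f, u, hfu, hux⟩ := geometric_hahn_banach_closed_point hCc hCcl hx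
  obtain ⟨M, hM, -⟩ := EReal.exists_between_coe_real h
  set ε : ℝ := f x - u with hε
  have hεpos : 0 < ε := sub_pos.2 hux
  set c : ℝ := xs a₀ + as₀ x - as₀ a₀ with hc
  set t : ℝ := max 0 ((M - c) / ε + 1) with hT
  have ht0 : 0 ≤ t := le_max_left _ _
  have ht : M < c + t * ε := by
    have h1 : (M - c) / ε + 1 ≤ t := le_max_right _ _
    have h2 : (M - c) / ε < t := lt_of_lt_of_le (by linarith) h1
    have := (div_lt_iff₀ hεpos).1 h2
    linarith
  have hfitz : fitz A (a₀, as₀ + t • f) ≤ ((as₀ a₀ + t * u : ℝ) : EReal) := by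
    apply iSup_le
    rintro ⟨p, hp⟩
    have hmono := hA (a₀, as₀) ha₀ p hp
    have hfp : f p.1 ≤ u := le_of_lt (hfu p.1 (hdom ⟨p.2, hp⟩))
    simp only [ContinuousLinearMap.sub_apply, map_sub] at hmono
    rw [EReal.coe_le_coe_iff]
    simp only [ContinuousLinearMap.add_apply, ContinuousLinearMap.coe_smul',
      Pi.smul_apply, smul_eq_mul]
    nlinarith [mul_le_mul_of_nonneg_left hfp ht0]
  have key : ((xs a₀ + as₀ x + t * (f x) - (as₀ a₀ + t * u) : ℝ) : EReal)
      ≤ fitzConj A (xs, inclusionInDoubleDual ℝ X x) := by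
    refine le_trans ?_ (le_iSup (fun q : X × StrongDual ℝ X =>
      ((xs q.1 + (inclusionInDoubleDual ℝ X x) q.2 : ℝ) : EReal) - fitz A q)
      (a₀, as₀ + t • f))
    have : ((xs a₀ + (inclusionInDoubleDual ℝ X x) (as₀ + t • f) : ℝ) : EReal)
        - fitz A (a₀, as₀ + t • f)
        ≥ ((xs a₀ + (inclusionInDoubleDual ℝ X x) (as₀ + t • f) : ℝ) : EReal)
        - ((as₀ a₀ + t * u : ℝ) : EReal) := EReal.sub_le_sub le_rfl hfitz
    refine le_trans ?_ this
    rw [← EReal.coe_sub, EReal.coe_le_coe_iff, dual_def]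
    simp only [ContinuousLinearMap.add_apply, ContinuousLinearMap.coe_smul',
      Pi.smul_apply, smul_eq_mul]
    linarith
  have : (M : EReal) < fitzConj A (xs, inclusionInDoubleDual ℝ X x) := by
    refine lt_of_lt_of_le ?_ key
    rw [EReal.coe_lt_coe_iff]
    rw [hc] at ht
    nlinarith
  exact absurd (this.trans hM) (lt_irrefl _)

theorem stmt3 [CompleteSpace X] (A B : Set (X × StrongDual ℝ X))
    (hA : IsMaxMonotone A) (hB : IsMaxMonotone B)
    (V : Submodule ℝ X) (hVclosed : IsClosed (V : Set X))
    (hVeq : (V : Set X) = ⋃ lam ∈ Set.Ioi (0:ℝ), lam • (domOp A - domOp B)) :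
    (⋃ lam ∈ Set.Ioi (0:ℝ), lam • (domOp A - domOp B)) =
      ⋃ lam ∈ Set.Ioi (0:ℝ), lam •
        ({x : X | ∃ xs : StrongDual ℝ X, fitzConj A (xs, inclusionInDoubleDual ℝ X x) < ⊤} -
          {x : X | ∃ xs : StrongDual ℝ X, fitzConj B (xs, inclusionInDoubleDual ℝ X x) < ⊤}) := by
  obtain ⟨⟨a₀, as₀⟩, ha₀⟩ := maxMono_nonempty' hA
  obtain ⟨⟨b₀, bs₀⟩, hb₀⟩ := maxMono_nonempty' hB
  set E : Set X := {x : X | ∃ xs : StrongDual ℝ X, fitzConj A (xs, inclusionInDoubleDual ℝ X x) < ⊤}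
  set F : Set X := {x : X | ∃ xs : StrongDual ℝ X, fitzConj B (xs, inclusionInDoubleDual ℝ X x) < ⊤}
  have hsub : domOp A - domOp B ⊆ (V : Set X) := by
    intro z hz
    rw [hVeq]
    refine Set.mem_biUnion (show (1:ℝ) ∈ Set.Ioi 0 by norm_num) ?_
    exact ⟨z, hz, one_smul ℝ z⟩
  have hconv : ∀ v : X, Convex ℝ {x : X | x - v ∈ V} := by
    intro v x hx y hy α β hα hβ hαβ
    have h1 : α • (x - v) + β • (y - v) ∈ V := V.add_mem (V.smul_mem _ hx) (V.smul_mem _ hy)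
    have h2 : α • x + β • y - v = α • (x - v) + β • (y - v) := by
      rw [smul_sub, smul_sub]
      rw [show α • x - α • v + (β • y - β • v) = α • x + β • y - (α • v + β • v) by abel,
        ← add_smul, hαβ, one_smul]
    rwa [Set.mem_setOf_eq, h2]
  have hclosed : ∀ v : X, IsClosed {x : X | x - v ∈ V} :=
    fun v => hVclosed.preimage (continuous_id.sub continuous_const)
  -- dom A ⊆ {x | x - b₀ ∈ V}
  have hdomA : domOp A ⊆ {x : X | x - b₀ ∈ V} := by
    intro a ha
    exact hsub ⟨a, ha, b₀, ⟨bs₀, hb₀⟩, rfl⟩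
  have hdomB : domOp B ⊆ {x : X | x - a₀ ∈ V} := by
    intro b hb
    have : a₀ - b ∈ (V : Set X) := hsub ⟨a₀, ⟨as₀, ha₀⟩, b, hb, rfl⟩
    simpa using V.neg_mem this
  have hEV : E ⊆ {x : X | x - b₀ ∈ V} := by
    rintro x ⟨xs, hxs⟩
    exact mem_of_fitzConj_lt_top' hA.1 ha₀ (hconv b₀) (hclosed b₀) hdomA hxs
  have hFV : F ⊆ {x : X | x - a₀ ∈ V} := by
    rintro x ⟨xs, hxs⟩
    exact mem_of_fitzConj_lt_top' hB.1 hb₀ (hconv a₀) (hclosed a₀) hdomB hxs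
  have hb₀a₀ : b₀ - a₀ ∈ V := by
    have : a₀ - b₀ ∈ (V : Set X) := hsub ⟨a₀, ⟨as₀, ha₀⟩, b₀, ⟨bs₀, hb₀⟩, rfl⟩
    simpa using V.neg_mem this
  have hEF : E - F ⊆ (V : Set X) := by
    rintro z ⟨e, he, f, hf, rfl⟩
    have h1 : (e - b₀) - (f - a₀) ∈ V := V.sub_mem (hEV he) (hFV hf)
    have h2 : e - f = ((e - b₀) - (f - a₀)) + (b₀ - a₀) := by abel
    show e - f ∈ (V : Set X)
    rw [h2]
    exact V.add_mem h1 hb₀a₀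
  apply Set.Subset.antisymm
  · -- LHS ⊆ RHS via dom A ⊆ E, dom B ⊆ F
    refine Set.iUnion₂_mono fun lam _ => Set.smul_set_mono ?_
    refine Set.sub_subset_sub ?_ ?_
    · rintro a ⟨as, has⟩
      exact ⟨as, fitzConj_lt_top_of_mem' has⟩
    · rintro b ⟨bs, hbs⟩
      exact ⟨bs, fitzConj_lt_top_of_mem' hbs⟩
  · -- RHS ⊆ V = LHS
    rw [← hVeq]
    rintro z hz
    simp only [Set.mem_iUnion] at hz
    obtain ⟨lam, -, w, hw, rfl⟩ := hz
    exact V.smul_mem lam (hEF hw)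
end

section
/- Let X be a real Banach space, let A, B : X ⇉ X* be maximally monotone operators of type (FPV), and assume that ⋃_{λ>0} λ(dom A − dom B) is a closed linear subspace of X. Then ⋃_{λ>0} λ(dom A − dom B) = ⋃_{λ>0} λ(P_X(dom F_A) − P_X(dom F_B)), where P_X denotes the projection of X × X* onto the X coordinate. -/
open Pointwise Set NormedSpace

variable {X : Type*} [NormedAddCommGroup X] [NormedSpace ℝ X]

section Aux

variable {X : Type*} [NormedAddCommGroup X] [NormedSpace ℝ X]

lemma nonempty_of_max (A : Set (X × StrongDual ℝ X)) (hA : IsMaxMonotone A) : A.Nonempty := by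
  rcases A.eq_empty_or_nonempty with h | h
  · exfalso
    have := hA.2 0 0 (fun p hp => by simp [h] at hp)
    simp [h] at this
  · exact h

lemma dom_subset_proj_fitz (A : Set (X × StrongDual ℝ X)) (hA : IsMonotoneOp A) :
    domOp A ⊆ Prod.fst '' {q : X × StrongDual ℝ X | fitz A q < ⊤} := by
  rintro x ⟨xs, hxs⟩
  refine ⟨(x, xs), ?_, rfl⟩
  have hle : fitz A (x, xs) ≤ ((xs x : ℝ) : EReal) := by
    refine iSup_le fun p => ?_
    have hm := hA (x, xs) hxs p.1 p.2
    simp only [ContinuousLinearMap.sub_apply, map_sub] at hm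
    exact EReal.coe_le_coe_iff.2 (by linarith)
  exact lt_of_le_of_lt hle (EReal.coe_lt_top _)

lemma proj_fitz_subset_closure (A : Set (X × StrongDual ℝ X)) (hA : IsMaxMonotone A) :
    Prod.fst '' {q : X × StrongDual ℝ X | fitz A q < ⊤} ⊆ closure (convexHull ℝ (domOp A)) := by
  rintro _ ⟨⟨x, xs⟩, hq, rfl⟩
  simp only [Set.mem_setOf_eq] at hq
  by_contra hx
  set M : ℝ := (fitz A (x, xs)).toReal with hMdef
  have hM : ∀ p ∈ A, (p.2 x + xs p.1 - p.2 p.1 : ℝ) ≤ M := by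
    intro p hp
    have h1 : ((p.2 x + xs p.1 - p.2 p.1 : ℝ) : EReal) ≤ fitz A (x, xs) := by
      exact le_iSup (fun (p : A) =>
        ((p.1.2 x + xs p.1.1 - p.1.2 p.1.1 : ℝ) : EReal)) (⟨p, hp⟩ : A)
    have h2 : fitz A (x, xs) ≤ ((M : ℝ) : EReal) := EReal.le_coe_toReal hq.ne
    exact_mod_cast h1.trans h2
  obtain ⟨f, u, hfu, hux⟩ := geometric_hahn_banach_closed_point
    ((convex_convexHull ℝ (domOp A)).closure) isClosed_closure hx
  have hδ : (0 : ℝ) < f x - u := by linarith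
  set t : ℝ := max 1 ((M - xs x + 1) / (f x - u)) with htdef
  have ht : (0 : ℝ) < t := lt_of_lt_of_le one_pos (le_max_left _ _)
  have htδ : M - xs x + 1 ≤ t * (f x - u) := by
    have := le_max_right 1 ((M - xs x + 1) / (f x - u))
    calc M - xs x + 1 = ((M - xs x + 1) / (f x - u)) * (f x - u) := by
          field_simp
      _ ≤ t * (f x - u) := by
          apply mul_le_mul_of_nonneg_right _ hδ.le
          exact this.trans (le_of_eq rfl)
  have hxnot : (x, xs + t • f) ∉ A := by
    intro hmem
    have hxdom : x ∈ domOp A := ⟨xs + t • f, hmem⟩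
    have := hfu x (subset_closure (subset_convexHull ℝ _ hxdom))
    linarith
  have hnotall : ¬ (∀ p ∈ A, 0 ≤ ((xs + t • f) - p.2) (x - p.1)) := by
    intro h
    exact hxnot (hA.2 x (xs + t • f) h)
  push_neg at hnotall
  obtain ⟨p, hp, hneg⟩ := hnotall
  have hfp : f p.1 < u := hfu p.1 (subset_closure (subset_convexHull ℝ _ ⟨p.2, hp⟩))
  simp only [ContinuousLinearMap.sub_apply, ContinuousLinearMap.add_apply,
    ContinuousLinearMap.smul_apply, map_sub, smul_eq_mul] at hneg
  have hMp := hM p hp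
  have h5 : t * (f x - u) ≤ t * (f x - f p.1) :=
    mul_le_mul_of_nonneg_left (by linarith) ht.le
  linarith

end Aux


theorem stmt4 [CompleteSpace X] (A B : Set (X × StrongDual ℝ X))
    (hA : IsFPV A) (hB : IsFPV B)
    (V : Submodule ℝ X) (hVclosed : IsClosed (V : Set X))
    (hVeq : (V : Set X) = ⋃ lam ∈ Set.Ioi (0:ℝ), lam • (domOp A - domOp B)) :
    (⋃ lam ∈ Set.Ioi (0:ℝ), lam • (domOp A - domOp B)) =
      ⋃ lam ∈ Set.Ioi (0:ℝ), lam •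
        (Prod.fst '' {q : X × StrongDual ℝ X | fitz A q < ⊤} -
          Prod.fst '' {q : X × StrongDual ℝ X | fitz B q < ⊤}) := by
  have hAne := nonempty_of_max A hA.1
  have hBne := nonempty_of_max B hB.1
  obtain ⟨⟨a0, a0s⟩, ha0⟩ := hAne
  obtain ⟨⟨b0, b0s⟩, hb0⟩ := hBne
  have hsubV : domOp A - domOp B ⊆ (V : Set X) := by
    intro z hz
    rw [hVeq]
    exact Set.mem_iUnion₂.2 ⟨1, Set.mem_Ioi.2 one_pos, by simpa using hz⟩
  apply subset_antisymm
  · refine Set.iUnion₂_mono fun lam _ => ?_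
    exact Set.smul_set_mono (Set.sub_subset_sub
      (dom_subset_proj_fitz A hA.1.1) (dom_subset_proj_fitz B hB.1.1))
  · rw [← hVeq]
    refine Set.iUnion₂_subset fun lam hlam => ?_
    rintro _ ⟨z, hz, rfl⟩
    rw [Set.mem_sub] at hz
    obtain ⟨p, hpA, q, hqB, rfl⟩ := hz
    -- translated subspace sets
    have hCconv : ∀ c : X, Convex ℝ {y : X | y - c ∈ V} := by
      intro c y hy z hz a b ha hb hab
      have key : a • y + b • z - c = a • (y - c) + b • (z - c) + (a + b - 1) • c := by
        module
      simp only [Set.mem_setOf_eq] at *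
      rw [key, hab]
      have : ((1:ℝ) - 1) • c = 0 := by simp
      rw [this, add_zero]
      exact V.add_mem (V.smul_mem a hy) (V.smul_mem b hz)
    have hCclosed : ∀ c : X, IsClosed {y : X | y - c ∈ V} := by
      intro c
      exact hVclosed.preimage (continuous_id.sub continuous_const)
    have hclA : closure (convexHull ℝ (domOp A)) ⊆ {y : X | y - b0 ∈ V} := by
      refine closure_minimal (convexHull_min ?_ (hCconv b0)) (hCclosed b0)
      intro a ha
      exact hsubV (Set.sub_mem_sub ha ⟨b0s, hb0⟩)
    have hclB : closure (convexHull ℝ (domOp B)) ⊆ {y : X | y - a0 ∈ V} := by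
      refine closure_minimal (convexHull_min ?_ (hCconv a0)) (hCclosed a0)
      intro b hb
      have : a0 - b ∈ (V : Set X) := hsubV (Set.sub_mem_sub ⟨a0s, ha0⟩ hb)
      simpa using V.neg_mem this
    have hpV : p - b0 ∈ V := hclA (proj_fitz_subset_closure A hA.1 hpA)
    have hqV : q - a0 ∈ V := hclB (proj_fitz_subset_closure B hB.1 hqB)
    have hab : a0 - b0 ∈ V := hsubV (Set.sub_mem_sub ⟨a0s, ha0⟩ ⟨b0s, hb0⟩)
    have hpq : p - q ∈ V := by
      have : p - q = (p - b0) - (q - a0) - (a0 - b0) := by abel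
      rw [this]
      exact V.sub_mem (V.sub_mem hpV hqV) hab
    exact V.smul_mem lam hpq
end

section
/- Let X be a real Banach space and let A : X ⇉ X* be ultramaximally monotone with 0 ∈ dom A. Assume A is coercive in the sense that for every K > 0 there exists ρ > 0 such that ⟨a, a*⟩ ≥ K‖a‖ for every (a, a*) ∈ gra A with ‖a‖ ≥ ρ. Then ran A = X*. -/
open Pointwise Set NormedSpace

variable {X : Type*} [NormedAddCommGroup X] [NormedSpace ℝ X]

set_option maxHeartbeats 1000000 in
lemma key_bound (A : Set (X × StrongDual ℝ X)) (hmono : IsMonotoneOp A)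
    (xs ys : StrongDual ℝ X) (h0 : ((0 : X), ys) ∈ A)
    (ρ : ℝ) (hρ : 0 < ρ)
    (hco : ∀ p ∈ A, ρ ≤ ‖p.1‖ → (‖xs‖ + 1) * ‖p.1‖ ≤ p.2 p.1)
    (s : Finset (X × StrongDual ℝ X)) (lam : X × StrongDual ℝ X → ℝ)
    (hsA : ∀ p ∈ s, p ∈ A) (hlam : ∀ p ∈ s, 0 ≤ lam p) :
    ∑ p ∈ s, lam p * ((xs - p.2) p.1) ≤
      (ρ * (1 + (‖xs‖ + ‖ys‖))) * ‖∑ p ∈ s, lam p • (xs - p.2)‖ := by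
  set M := ‖xs‖ + ‖ys‖ with hM
  have hM0 : 0 ≤ M := by positivity
  set R := ρ * (1 + M) with hRdef
  have hR0 : 0 ≤ R := by positivity
  set L := ∑ p ∈ s, lam p with hLdef
  have hL0 : 0 ≤ L := Finset.sum_nonneg hlam
  set abar := ∑ p ∈ s, lam p • p.1 with habar
  set u := ∑ p ∈ s, lam p • (xs - p.2) with hu
  set c := ∑ p ∈ s, lam p * ((xs - p.2) p.1) with hc
  have habar_apply : ∀ f : StrongDual ℝ X, f abar = ∑ q ∈ s, lam q * f q.1 := by
    intro f
    rw [habar, map_sum]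
    exact Finset.sum_congr rfl fun q _ => by rw [map_smul, smul_eq_mul]
  -- Step 1 : L * c ≤ u abar
  have hdd : 0 ≤ ∑ p ∈ s, ∑ q ∈ s, lam p * lam q * ((p.2 - q.2) (p.1 - q.1)) := by
    refine Finset.sum_nonneg fun p hp => Finset.sum_nonneg fun q hq => ?_
    exact mul_nonneg (mul_nonneg (hlam p hp) (hlam q hq)) (hmono p (hsA p hp) q (hsA q hq))
  have hexp : ∑ p ∈ s, ∑ q ∈ s, lam p * lam q * ((p.2 - q.2) (p.1 - q.1))
      = 2 * ((∑ p ∈ s, lam p * (p.2 p.1)) * L - ∑ p ∈ s, lam p * (p.2 abar)) := by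
    have e1 : ∀ p q : X × StrongDual ℝ X, lam p * lam q * ((p.2 - q.2) (p.1 - q.1))
        = lam p * (p.2 p.1) * lam q + lam q * (q.2 q.1) * lam p
          - lam p * (lam q * (p.2 q.1)) - lam q * (lam p * (q.2 p.1)) := by
      intro p q
      simp only [ContinuousLinearMap.sub_apply, map_sub]
      ring
    calc ∑ p ∈ s, ∑ q ∈ s, lam p * lam q * ((p.2 - q.2) (p.1 - q.1))
        = ∑ p ∈ s, ∑ q ∈ s, (lam p * (p.2 p.1) * lam q + lam q * (q.2 q.1) * lam p
          - lam p * (lam q * (p.2 q.1)) - lam q * (lam p * (q.2 p.1))) :=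
          Finset.sum_congr rfl fun p _ => Finset.sum_congr rfl fun q _ => e1 p q
      _ = 2 * ((∑ p ∈ s, lam p * (p.2 p.1)) * L - ∑ p ∈ s, lam p * (p.2 abar)) := by
          simp only [Finset.sum_sub_distrib, Finset.sum_add_distrib, ← Finset.sum_mul,
            ← Finset.mul_sum]
          have h3 : ∑ x ∈ s, lam x * ∑ i ∈ s, lam i * x.2 i.1 = ∑ p ∈ s, lam p * p.2 abar :=
            Finset.sum_congr rfl fun p _ => by rw [habar_apply]
          have h4 : ∑ x ∈ s, ∑ y ∈ s, lam y * (lam x * y.2 x.1) = ∑ p ∈ s, lam p * p.2 abar := by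
            rw [Finset.sum_comm]
            refine Finset.sum_congr rfl fun y _ => ?_
            rw [habar_apply, Finset.mul_sum]
          rw [h3, h4, ← hLdef]
          ring
  have hstep1 : L * c ≤ u abar := by
    have h1 : ∑ p ∈ s, lam p * (p.2 abar) ≤ (∑ p ∈ s, lam p * (p.2 p.1)) * L := by
      rw [hexp] at hdd; linarith
    have hua : u abar = L * (xs abar) - ∑ p ∈ s, lam p * (p.2 abar) := by
      rw [hu, ContinuousLinearMap.sum_apply]
      simp only [ContinuousLinearMap.smul_apply, ContinuousLinearMap.sub_apply, smul_eq_mul,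
        mul_sub]
      rw [Finset.sum_sub_distrib, ← Finset.sum_mul, hLdef, mul_comm]
    have hca : c = xs abar - ∑ p ∈ s, lam p * (p.2 p.1) := by
      rw [hc, habar_apply xs, ← Finset.sum_sub_distrib]
      exact Finset.sum_congr rfl fun p _ => by
        simp only [ContinuousLinearMap.sub_apply]; ring
    rw [hua, hca]
    nlinarith [h1]
  -- Step 2 : termwise bounds
  have hbound_all : ∀ p ∈ A, (xs - p.2) p.1 ≤ M * ‖p.1‖ := by
    intro p hp
    have hm := hmono p hp ((0 : X), ys) h0
    simp only [ContinuousLinearMap.sub_apply, sub_zero] at hm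
    have h1 : xs p.1 ≤ ‖xs‖ * ‖p.1‖ := le_trans (le_abs_self _) (xs.le_opNorm p.1)
    have h2 : -(ys p.1) ≤ ‖ys‖ * ‖p.1‖ := by
      have := le_trans (le_abs_self _) (ys.le_opNorm (-p.1))
      simpa using this
    simp only [ContinuousLinearMap.sub_apply, hM]
    nlinarith
  have hbound_big : ∀ p ∈ A, ρ ≤ ‖p.1‖ → (xs - p.2) p.1 ≤ -‖p.1‖ := by
    intro p hp hbig
    have h1 : xs p.1 ≤ ‖xs‖ * ‖p.1‖ := le_trans (le_abs_self _) (xs.le_opNorm p.1)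
    have h2 := hco p hp hbig
    simp only [ContinuousLinearMap.sub_apply]
    nlinarith
  set t := s.filter (fun p => ‖p.1‖ < ρ) with ht
  set t' := s.filter (fun p => ¬ ‖p.1‖ < ρ) with ht'
  set S := ∑ p ∈ t, lam p * ‖p.1‖ with hSdef
  set B := ∑ p ∈ t', lam p * ‖p.1‖ with hBdef
  have hS0 : 0 ≤ S := Finset.sum_nonneg fun p hp =>
    mul_nonneg (hlam p (Finset.mem_filter.mp hp).1) (norm_nonneg _)
  have hB0 : 0 ≤ B := Finset.sum_nonneg fun p hp =>
    mul_nonneg (hlam p (Finset.mem_filter.mp hp).1) (norm_nonneg _)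
  have hc2 : c ≤ M * S - B := by
    rw [hc, ← Finset.sum_filter_add_sum_filter_not s (fun p => ‖p.1‖ < ρ), ← ht, ← ht']
    have hA' : ∑ p ∈ t, lam p * ((xs - p.2) p.1) ≤ M * S := by
      rw [hSdef, Finset.mul_sum]
      refine Finset.sum_le_sum fun p hp => ?_
      have hps := Finset.mem_filter.mp hp
      calc lam p * ((xs - p.2) p.1) ≤ lam p * (M * ‖p.1‖) :=
            mul_le_mul_of_nonneg_left (hbound_all p (hsA p hps.1)) (hlam p hps.1)
        _ = M * (lam p * ‖p.1‖) := by ring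
    have hB' : ∑ p ∈ t', lam p * ((xs - p.2) p.1) ≤ -B := by
      rw [hBdef, ← Finset.sum_neg_distrib]
      refine Finset.sum_le_sum fun p hp => ?_
      have hps := Finset.mem_filter.mp hp
      have : (xs - p.2) p.1 ≤ -‖p.1‖ :=
        hbound_big p (hsA p hps.1) (not_lt.mp hps.2)
      nlinarith [hlam p hps.1]
    linarith
  have hSL : S ≤ ρ * L := by
    rw [hLdef, Finset.mul_sum]
    calc S ≤ ∑ p ∈ t, ρ * lam p := by
          refine Finset.sum_le_sum fun p hp => ?_
          have hps := Finset.mem_filter.mp hp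
          calc lam p * ‖p.1‖ ≤ lam p * ρ :=
                mul_le_mul_of_nonneg_left (le_of_lt hps.2) (hlam p hps.1)
            _ = ρ * lam p := mul_comm _ _
      _ ≤ ∑ p ∈ s, ρ * lam p := by
          refine Finset.sum_le_sum_of_subset_of_nonneg (Finset.filter_subset _ _)
            fun p hp _ => mul_nonneg (le_of_lt hρ) (hlam p hp)
  have habar_norm : ‖abar‖ ≤ S + B := by
    calc ‖abar‖ ≤ ∑ p ∈ s, ‖lam p • p.1‖ := norm_sum_le _ _
      _ = ∑ p ∈ s, lam p * ‖p.1‖ := Finset.sum_congr rfl fun p hp => by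
          rw [norm_smul, Real.norm_eq_abs, abs_of_nonneg (hlam p hp)]
      _ = S + B := by
          rw [hSdef, hBdef, ← Finset.sum_filter_add_sum_filter_not s (fun p => ‖p.1‖ < ρ)]
  by_cases hcase : M * S ≤ B
  · have : c ≤ 0 := by linarith
    have : 0 ≤ R * ‖u‖ := mul_nonneg hR0 (norm_nonneg _)
    linarith
  · push_neg at hcase
    have hLpos : 0 < L := by
      rcases lt_or_eq_of_le hL0 with h | h
      · exact h
      · exfalso
        have : S ≤ 0 := by rw [← h] at hSL; linarith
        nlinarith
    have habar2 : ‖abar‖ ≤ L * R := by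
      have : S + B ≤ ρ * L + M * S := by linarith
      have : S + B ≤ ρ * L + M * (ρ * L) := by nlinarith
      rw [hRdef]; nlinarith [habar_norm]
    have huabs : u abar ≤ ‖u‖ * ‖abar‖ := le_trans (le_abs_self _) (u.le_opNorm abar)
    have : L * c ≤ ‖u‖ * (L * R) := by
      calc L * c ≤ u abar := hstep1
        _ ≤ ‖u‖ * ‖abar‖ := huabs
        _ ≤ ‖u‖ * (L * R) := mul_le_mul_of_nonneg_left habar2 (norm_nonneg _)
    have := le_of_mul_le_mul_left (by linarith [this] : L * c ≤ L * (R * ‖u‖)) hLpos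
    exact this

lemma sum_support_smul_ext {ι : Type*} {E : Type*} [AddCommGroup E] [Module ℝ E]
    (lam : ι →₀ ℝ) (t : Finset ι) (h : lam.support ⊆ t) (v : ι → E) :
    ∑ p ∈ lam.support, lam p • v p = ∑ p ∈ t, lam p • v p :=
  Finset.sum_subset h fun p _ hp => by rw [Finsupp.notMem_support_iff.mp hp, zero_smul]

set_option maxHeartbeats 1000000 in
theorem stmt7 [CompleteSpace X] (A : Set (X × StrongDual ℝ X)) (hA : IsUltraMaxMonotone A)
    (h0 : (0 : X) ∈ domOp A)
    (hcoercive : ∀ K : ℝ, 0 < K → ∃ ρ : ℝ, 0 < ρ ∧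
      ∀ p ∈ A, ρ ≤ ‖p.1‖ → K * ‖p.1‖ ≤ p.2 p.1) :
    ranOp A = Set.univ := by
  classical
  ext xs
  simp only [Set.mem_univ, iff_true]
  obtain ⟨ys, hys⟩ := h0
  obtain ⟨ρ, hρ, hco⟩ := hcoercive (‖xs‖ + 1) (by positivity)
  set R := ρ * (1 + (‖xs‖ + ‖ys‖)) with hRdef
  have hR0 : 0 ≤ R := by positivity
  -- the cone of finite nonnegative combinations of the constraints
  set D : Set (StrongDual ℝ X × ℝ) :=
    {uc | ∃ lam : (X × StrongDual ℝ X) →₀ ℝ, (∀ p, 0 ≤ lam p) ∧ (∀ p ∈ lam.support, p ∈ A) ∧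
      uc.1 = ∑ p ∈ lam.support, lam p • (xs - p.2) ∧
      uc.2 = ∑ p ∈ lam.support, lam p • ((xs - p.2) p.1)} with hDdef
  have hkeyD : ∀ uc ∈ D, uc.2 ≤ R * ‖uc.1‖ := by
    rintro ⟨u, c⟩ ⟨lam, hl0, hlA, hu, hc⟩
    simp only at hu hc
    rw [hu, hc]
    have := key_bound A hA.1 xs ys hys ρ hρ hco lam.support lam hlA
      (fun p _ => hl0 p)
    simpa [smul_eq_mul] using this
  have hD0 : ((0 : StrongDual ℝ X), (0 : ℝ)) ∈ D := by
    refine ⟨0, fun p => le_refl _, by simp, by simp, by simp⟩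
  have hDadd : ∀ uc ∈ D, ∀ vc ∈ D, uc + vc ∈ D := by
    rintro ⟨u1, c1⟩ ⟨lam1, h10, h1A, hu1, hc1⟩ ⟨u2, c2⟩ ⟨lam2, h20, h2A, hu2, hc2⟩
    dsimp only at hu1 hc1 hu2 hc2
    refine ⟨lam1 + lam2, fun p => by
        simpa using add_nonneg (h10 p) (h20 p), ?_, ?_, ?_⟩
    · intro p hp
      rcases Finset.mem_union.mp (Finsupp.support_add hp) with h | h
      · exact h1A p h
      · exact h2A p h
    · show u1 + u2 = _
      rw [sum_support_smul_ext (lam1 + lam2) (lam1.support ∪ lam2.support)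
          Finsupp.support_add (v := fun p => xs - p.2), hu1, hu2,
        sum_support_smul_ext lam1 (lam1.support ∪ lam2.support) Finset.subset_union_left
          (v := fun p => xs - p.2),
        sum_support_smul_ext lam2 (lam1.support ∪ lam2.support) Finset.subset_union_right
          (v := fun p => xs - p.2),
        ← Finset.sum_add_distrib]
      exact Finset.sum_congr rfl fun p _ => by
        simp [Finsupp.add_apply, add_smul]
    · show c1 + c2 = _
      rw [sum_support_smul_ext (lam1 + lam2) (lam1.support ∪ lam2.support)
          Finsupp.support_add, hc1, hc2,
        sum_support_smul_ext lam1 (lam1.support ∪ lam2.support) Finset.subset_union_left,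
        sum_support_smul_ext lam2 (lam1.support ∪ lam2.support) Finset.subset_union_right,
        ← Finset.sum_add_distrib]
      exact Finset.sum_congr rfl fun p _ => by
        simp [Finsupp.add_apply, add_smul, add_mul]
  have hDsmul : ∀ t : ℝ, 0 < t → ∀ uc ∈ D, (t • uc.1, t * uc.2) ∈ D := by
    rintro t ht ⟨u, c⟩ ⟨lam, hl0, hlA, hu, hc⟩
    dsimp only at hu hc
    refine ⟨t • lam, fun p => by
        simp only [Finsupp.smul_apply, smul_eq_mul]
        exact mul_nonneg ht.le (hl0 p), ?_, ?_, ?_⟩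
    · intro p hp
      rw [Finsupp.support_smul_eq (ne_of_gt ht)] at hp
      exact hlA p hp
    · show t • u = _
      rw [Finsupp.support_smul_eq (ne_of_gt ht), hu, Finset.smul_sum]
      exact Finset.sum_congr rfl fun p _ => by
        simp [Finsupp.smul_apply, smul_smul]
    · show t * c = _
      rw [Finsupp.support_smul_eq (ne_of_gt ht), hc, Finset.mul_sum]
      exact Finset.sum_congr rfl fun p _ => by
        simp [Finsupp.smul_apply, smul_eq_mul, mul_assoc]
  -- the sublinear functional
  set q : StrongDual ℝ X → ℝ :=
    fun w => sInf ((fun uc : StrongDual ℝ X × ℝ => R * ‖w + uc.1‖ - uc.2) '' D) with hqdef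
  have hSne : ∀ w : StrongDual ℝ X,
      ((fun uc : StrongDual ℝ X × ℝ => R * ‖w + uc.1‖ - uc.2) '' D).Nonempty :=
    fun w => ⟨R * ‖w + 0‖ - 0, ⟨(0, 0), hD0, rfl⟩⟩
  have hSbdd : ∀ w : StrongDual ℝ X,
      ∀ r ∈ (fun uc : StrongDual ℝ X × ℝ => R * ‖w + uc.1‖ - uc.2) '' D, -(R * ‖w‖) ≤ r := by
    rintro w r ⟨⟨u, c⟩, huc, rfl⟩
    have h1 : c ≤ R * ‖u‖ := hkeyD _ huc
    have h2 : ‖u‖ ≤ ‖w + u‖ + ‖w‖ := by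
      calc ‖u‖ = ‖(w + u) - w‖ := by rw [add_sub_cancel_left]
        _ ≤ ‖w + u‖ + ‖w‖ := norm_sub_le _ _
    simp only
    nlinarith [norm_nonneg (w + u), norm_nonneg w]
  have hq_le : ∀ w : StrongDual ℝ X, q w ≤ R * ‖w‖ := by
    intro w
    have hmem : R * ‖w + 0‖ - 0 ∈
        (fun uc : StrongDual ℝ X × ℝ => R * ‖w + uc.1‖ - uc.2) '' D :=
      ⟨((0 : StrongDual ℝ X), (0 : ℝ)), hD0, rfl⟩
    have := csInf_le ⟨-(R * ‖w‖), fun r hr => hSbdd w r hr⟩ hmem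
    simpa using this
  have hq_ge : ∀ w : StrongDual ℝ X, -(R * ‖w‖) ≤ q w := fun w =>
    le_csInf (hSne w) (hSbdd w)
  have hq_elem : ∀ (w : StrongDual ℝ X), ∀ uc ∈ D, q w ≤ R * ‖w + uc.1‖ - uc.2 := by
    intro w uc huc
    exact csInf_le ⟨-(R * ‖w‖), fun r hr => hSbdd w r hr⟩ ⟨uc, huc, rfl⟩
  have hq_add : ∀ w1 w2 : StrongDual ℝ X, q (w1 + w2) ≤ q w1 + q w2 := by
    intro w1 w2
    have step : ∀ a ∈ (fun uc : StrongDual ℝ X × ℝ => R * ‖w1 + uc.1‖ - uc.2) '' D,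
        q (w1 + w2) - a ≤ q w2 := by
      rintro a ⟨⟨u1, c1⟩, hu1, rfl⟩
      refine le_csInf (hSne w2) ?_
      rintro b ⟨⟨u2, c2⟩, hu2, rfl⟩
      have hsum := hq_elem (w1 + w2) _ (hDadd _ hu1 _ hu2)
      simp only [Prod.fst_add, Prod.snd_add] at hsum
      have htri : ‖w1 + w2 + (u1 + u2)‖ ≤ ‖w1 + u1‖ + ‖w2 + u2‖ := by
        rw [add_add_add_comm]
        exact norm_add_le _ _
      show q (w1 + w2) - (R * ‖w1 + u1‖ - c1) ≤ R * ‖w2 + u2‖ - c2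
      nlinarith
    have : ∀ a ∈ (fun uc : StrongDual ℝ X × ℝ => R * ‖w1 + uc.1‖ - uc.2) '' D,
        q (w1 + w2) - q w2 ≤ a := fun a ha => by linarith [step a ha]
    have h2 : q (w1 + w2) - q w2 ≤ q w1 := le_csInf (hSne w1) this
    linarith
  have hq_smul : ∀ t : ℝ, 0 < t → ∀ w : StrongDual ℝ X, q (t • w) = t * q w := by
    intro t ht w
    have himg : (fun uc : StrongDual ℝ X × ℝ => R * ‖t • w + uc.1‖ - uc.2) '' D
        = t • ((fun uc : StrongDual ℝ X × ℝ => R * ‖w + uc.1‖ - uc.2) '' D) := by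
      ext r
      constructor
      · rintro ⟨⟨u, c⟩, huc, rfl⟩
        refine ⟨R * ‖w + t⁻¹ • u‖ - t⁻¹ * c,
          ⟨(t⁻¹ • u, t⁻¹ * c), hDsmul t⁻¹ (by positivity) (u, c) huc, rfl⟩, ?_⟩
        simp only [smul_eq_mul]
        have : ‖t • w + u‖ = t * ‖w + t⁻¹ • u‖ := by
          rw [show t • w + u = t • (w + t⁻¹ • u) by
            rw [smul_add, smul_smul, mul_inv_cancel₀ (ne_of_gt ht), one_smul]]
          rw [norm_smul, Real.norm_eq_abs, abs_of_pos ht]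
        rw [this]
        field_simp
      · rintro ⟨r', ⟨⟨u, c⟩, huc, rfl⟩, rfl⟩
        refine ⟨(t • u, t * c), hDsmul t ht (u, c) huc, ?_⟩
        simp only [smul_eq_mul]
        have : ‖t • w + t • u‖ = t * ‖w + u‖ := by
          rw [← smul_add, norm_smul, Real.norm_eq_abs, abs_of_pos ht]
        rw [this]
        ring
    rw [hqdef]
    simp only
    rw [himg, Real.sInf_smul_of_nonneg ht.le, smul_eq_mul]
  -- Hahn–Banach (Mazur–Orlicz)
  have hq0 : 0 ≤ q 0 := by
    refine le_csInf (hSne 0) ?_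
    rintro b ⟨⟨u, c⟩, huc, rfl⟩
    have := hkeyD _ huc
    simp only [zero_add]
    linarith
  obtain ⟨g, -, hg⟩ := exists_extension_of_le_sublinear
    (⟨⊥, 0⟩ : (StrongDual ℝ X) →ₗ.[ℝ] ℝ) q hq_smul hq_add
    (fun x => by
      have hx0 : (x : StrongDual ℝ X) = 0 := Submodule.mem_bot ℝ |>.mp x.2
      show (0 : ℝ) ≤ q x
      rw [hx0]
      exact hq0)
  have hgnorm : ∀ w : StrongDual ℝ X, ‖g w‖ ≤ R * ‖w‖ := by
    intro w
    rw [Real.norm_eq_abs, abs_le]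
    constructor
    · have := le_trans (hg (-w)) (hq_le (-w))
      rw [map_neg, norm_neg] at this
      linarith
    · exact le_trans (hg w) (hq_le w)
  set z : StrongDual ℝ (StrongDual ℝ X) := LinearMap.mkContinuous g R hgnorm with hzdef
  have hz_apply : ∀ w : StrongDual ℝ X, z w = g w := fun w => rfl
  have hrel : ∀ p ∈ A, 0 ≤ (z - inclusionInDoubleDual ℝ X p.1) (xs - p.2) := by
    intro p hp
    have hsingle : ((xs - p.2), ((xs - p.2) p.1)) ∈ D := by
      refine ⟨Finsupp.single p 1, ?_, ?_, ?_, ?_⟩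
      · intro r
        rw [Finsupp.single_apply]
        split <;> norm_num
      · intro r hr
        have : r = p := by
          have := Finsupp.support_single_subset hr
          simpa using this
        rwa [this]
      · rw [Finsupp.support_single_ne_zero p one_ne_zero]
        simp
      · rw [Finsupp.support_single_ne_zero p one_ne_zero]
        simp
    have hq1 : q (-(xs - p.2)) ≤ -((xs - p.2) p.1) := by
      have := hq_elem (-(xs - p.2)) _ hsingle
      simpa using this
    have hg1 : g (-(xs - p.2)) ≤ -((xs - p.2) p.1) := le_trans (hg _) hq1
    rw [map_neg] at hg1
    simp only [ContinuousLinearMap.sub_apply] at hg1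
    simp only [ContinuousLinearMap.sub_apply, NormedSpace.dual_def, hz_apply]
    linarith
  obtain ⟨x, -, hx⟩ := hA.2 z xs hrel
  exact ⟨x, hx⟩
end

section
/- Let X be a real Banach space, let δ > 0 and α > 1, and let A : X ⇉ X* be a monotone operator with nonempty graph satisfying ⟨x − y, x* − y*⟩ ≥ δ‖x − y‖^α for all (x, x*), (y, y*) ∈ gra A. Then A is ultramaximally monotone if and only if ran A = X*. -/
open Pointwise Set NormedSpace

variable {X : Type*} [NormedAddCommGroup X] [NormedSpace ℝ X]

/-- Gram-type inequality for a pairwise monotone finite family. -/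
lemma gram_aux {ι : Type*} (t : Finset ι) (w : ι → ℝ) (q : ι → X) (qs : ι → StrongDual ℝ X)
    (hw : ∀ i ∈ t, 0 ≤ w i) (hw1 : ∑ i ∈ t, w i = 1)
    (hm : ∀ i ∈ t, ∀ j ∈ t, 0 ≤ (qs i - qs j) (q i - q j)) :
    (∑ i ∈ t, w i • qs i) (∑ j ∈ t, w j • q j) ≤ ∑ i ∈ t, w i * qs i (q i) := by
  have key : 0 ≤ ∑ i ∈ t, ∑ j ∈ t, (w i * w j) * ((qs i - qs j) (q i - q j)) :=
    Finset.sum_nonneg fun i hi => Finset.sum_nonneg fun j hj =>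
      mul_nonneg (mul_nonneg (hw i hi) (hw j hj)) (hm i hi j hj)
  have happ : (∑ i ∈ t, w i • qs i) (∑ j ∈ t, w j • q j)
      = ∑ i ∈ t, ∑ j ∈ t, (w i * w j) * qs i (q j) := by
    rw [ContinuousLinearMap.sum_apply]
    refine Finset.sum_congr rfl fun i hi => ?_
    rw [ContinuousLinearMap.smul_apply, map_sum, Finset.smul_sum]
    refine Finset.sum_congr rfl fun j hj => ?_
    rw [map_smul]
    simp [smul_eq_mul]; ring
  have e1 : ∑ i ∈ t, ∑ j ∈ t, (w i * w j) * qs i (q i) = ∑ i ∈ t, w i * qs i (q i) := by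
    refine Finset.sum_congr rfl fun i hi => ?_
    rw [show (fun j => (w i * w j) * qs i (q i)) = fun j => (qs i (q i) * w i) * w j by
      funext j; ring]
    rw [← Finset.mul_sum, hw1, mul_one]; ring
  have e2 : ∑ i ∈ t, ∑ j ∈ t, (w i * w j) * qs j (q j) = ∑ i ∈ t, w i * qs i (q i) := by
    rw [Finset.sum_comm]
    refine Finset.sum_congr rfl fun j hj => ?_
    rw [show (fun i => (w i * w j) * qs j (q j)) = fun i => (qs j (q j) * w j) * w i by
      funext i; ring]
    rw [← Finset.mul_sum, hw1, mul_one]; ring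
  have e4 : ∑ i ∈ t, ∑ j ∈ t, (w i * w j) * qs j (q i)
      = ∑ i ∈ t, ∑ j ∈ t, (w i * w j) * qs i (q j) := by
    rw [Finset.sum_comm]
    exact Finset.sum_congr rfl fun j hj => Finset.sum_congr rfl fun i hi => by ring
  have split : ∑ i ∈ t, ∑ j ∈ t, (w i * w j) * ((qs i - qs j) (q i - q j))
      = (∑ i ∈ t, ∑ j ∈ t, (w i * w j) * qs i (q i))
        - (∑ i ∈ t, ∑ j ∈ t, (w i * w j) * qs i (q j))
        - (∑ i ∈ t, ∑ j ∈ t, (w i * w j) * qs j (q i))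
        + (∑ i ∈ t, ∑ j ∈ t, (w i * w j) * qs j (q j)) := by
    simp only [← Finset.sum_sub_distrib, ← Finset.sum_add_distrib]
    refine Finset.sum_congr rfl fun i hi => Finset.sum_congr rfl fun j hj => ?_
    simp only [ContinuousLinearMap.sub_apply, map_sub]
    ring
  rw [split, e1, e2, e4, ← happ] at key
  linarith

/-- The key estimate: any convex combination of the constraint data satisfies
a fixed sublinear bound. -/
lemma combo_est (A : Set (X × StrongDual ℝ X)) (hmono : IsMonotoneOp A) {δ α : ℝ}
    (hδ : 0 < δ) (hα : 1 < α)
    (hstrong : ∀ p ∈ A, ∀ q ∈ A, δ * ‖p.1 - q.1‖ ^ α ≤ (p.2 - q.2) (p.1 - q.1))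
    (a₀ : X × StrongDual ℝ X) (ha₀ : a₀ ∈ A) (xs : StrongDual ℝ X)
    {ι : Type*} (t : Finset ι) (w : ι → ℝ) (z : ι → X × StrongDual ℝ X)
    (hw : ∀ i ∈ t, 0 ≤ w i) (hw1 : ∑ i ∈ t, w i = 1) (hz : ∀ i ∈ t, z i ∈ A) :
    ∑ i ∈ t, w i * ((xs - (z i).2) ((z i).1))
      ≤ (xs - ∑ i ∈ t, w i • (z i).2) a₀.1
        + (‖xs - a₀.2‖ / δ) ^ (α - 1)⁻¹ * ‖xs - ∑ i ∈ t, w i • (z i).2‖ := by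
  set v := xs - ∑ i ∈ t, w i • (z i).2 with hv
  set m₀ := (‖xs - a₀.2‖ / δ) ^ (α - 1)⁻¹ with hm₀def
  set u : ι → X := fun i => (z i).1 - a₀.1 with hu
  set m := ∑ i ∈ t, w i * ‖u i‖ with hmdef
  have hm0 : 0 ≤ m := Finset.sum_nonneg fun i hi => mul_nonneg (hw i hi) (norm_nonneg _)
  have hm₀0 : 0 ≤ m₀ := Real.rpow_nonneg (div_nonneg (norm_nonneg _) hδ.le) _
  -- split off the constant part
  have hvapp : v a₀.1 = xs a₀.1 - ∑ i ∈ t, w i * ((z i).2 a₀.1) := by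
    rw [hv]
    simp [ContinuousLinearMap.sub_apply, ContinuousLinearMap.sum_apply,
      ContinuousLinearMap.smul_apply, smul_eq_mul]
  have hT : ∑ i ∈ t, w i * ((xs - (z i).2) ((z i).1))
      = v a₀.1 + ∑ i ∈ t, w i * ((xs - (z i).2) (u i)) := by
    have h1 : ∀ i ∈ t, w i * ((xs - (z i).2) ((z i).1))
        = (w i * xs a₀.1 - w i * ((z i).2 a₀.1)) + w i * ((xs - (z i).2) (u i)) := by
      intro i hi
      have h2 : (z i).1 = a₀.1 + u i := by
        show (z i).1 = a₀.1 + ((z i).1 - a₀.1); abel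
      rw [h2, map_add]
      simp only [ContinuousLinearMap.sub_apply]
      ring
    rw [Finset.sum_congr rfl h1, Finset.sum_add_distrib, Finset.sum_sub_distrib,
      ← Finset.sum_mul, hw1, one_mul, hvapp]
  rw [hT]
  have main : ∑ i ∈ t, w i * ((xs - (z i).2) (u i)) ≤ m₀ * ‖v‖ := by
    set G := ∑ i ∈ t, w i * ((xs - (z i).2) (u i)) with hG
    -- Bound B : G ≤ ‖v‖ * m
    have boundB : G ≤ ‖v‖ * m := by
      have hsplit : ∀ i ∈ t, w i * ((xs - (z i).2) (u i))
          = w i * (v (u i)) + (w i * ((∑ j ∈ t, w j • (z j).2) (u i)) - w i * ((z i).2 (u i))) := by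
        intro i hi
        have : (xs - (z i).2) (u i)
            = v (u i) + ((∑ j ∈ t, w j • (z j).2) (u i)) - (z i).2 (u i) := by
          rw [hv]; simp only [ContinuousLinearMap.sub_apply]; ring
        rw [this]; ring
      have hgram := gram_aux t w u (fun i => (z i).2) hw hw1 (fun i hi j hj => by
        have h := hmono (z i) (hz i hi) (z j) (hz j hj)
        have he : u i - u j = (z i).1 - (z j).1 := by
          show ((z i).1 - a₀.1) - ((z j).1 - a₀.1) = (z i).1 - (z j).1; abel
        rw [he]; exact h)
      have hA : ∑ i ∈ t, w i * ((∑ j ∈ t, w j • (z j).2) (u i))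
          = (∑ j ∈ t, w j • (z j).2) (∑ i ∈ t, w i • u i) := by
        rw [map_sum]
        exact Finset.sum_congr rfl fun i hi => by rw [map_smul]; simp [smul_eq_mul]
      have hvu : ∑ i ∈ t, w i * v (u i) = v (∑ i ∈ t, w i • u i) := by
        rw [map_sum]
        exact Finset.sum_congr rfl fun i hi => by rw [map_smul]; simp [smul_eq_mul]
      have hubarm : ‖∑ i ∈ t, w i • u i‖ ≤ m := by
        refine (norm_sum_le _ _).trans ?_
        rw [hmdef]
        refine Finset.sum_le_sum fun i hi => ?_
        rw [norm_smul, Real.norm_eq_abs, abs_of_nonneg (hw i hi)]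
      have hvubar : v (∑ i ∈ t, w i • u i) ≤ ‖v‖ * m := by
        have ha : v (∑ i ∈ t, w i • u i) ≤ ‖v‖ * ‖∑ i ∈ t, w i • u i‖ := by
          have hb := v.le_opNorm (∑ i ∈ t, w i • u i)
          rw [Real.norm_eq_abs] at hb
          exact (le_abs_self _).trans hb
        exact ha.trans (mul_le_mul_of_nonneg_left hubarm (norm_nonneg _))
      rw [hG, Finset.sum_congr rfl hsplit, Finset.sum_add_distrib, Finset.sum_sub_distrib,
        hA, hvu]
      linarith
    -- Bound A : G ≤ ‖xs - a₀.2‖ * m - δ * m ^ α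
    have boundA : G ≤ ‖xs - a₀.2‖ * m - δ * m ^ α := by
      have h1 : ∀ i ∈ t, w i * ((xs - (z i).2) (u i))
          ≤ w i * (‖xs - a₀.2‖ * ‖u i‖) - w i * (δ * ‖u i‖ ^ α) := by
        intro i hi
        have hs := hstrong (z i) (hz i hi) a₀ ha₀
        have hb2 : δ * ‖u i‖ ^ α ≤ ((z i).2 - a₀.2) (u i) := hs
        have hb1 : (xs - a₀.2) (u i) ≤ ‖xs - a₀.2‖ * ‖u i‖ := by
          refine le_trans (le_abs_self _) ?_
          simpa [Real.norm_eq_abs] using (xs - a₀.2).le_opNorm (u i)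
        have heq : (xs - (z i).2) (u i) = (xs - a₀.2) (u i) - ((z i).2 - a₀.2) (u i) := by
          simp only [ContinuousLinearMap.sub_apply]; ring
        calc w i * ((xs - (z i).2) (u i))
            ≤ w i * (‖xs - a₀.2‖ * ‖u i‖ - δ * ‖u i‖ ^ α) := by
              refine mul_le_mul_of_nonneg_left ?_ (hw i hi)
              rw [heq]; linarith
          _ = w i * (‖xs - a₀.2‖ * ‖u i‖) - w i * (δ * ‖u i‖ ^ α) := by ring
      have h2 := Finset.sum_le_sum h1
      rw [Finset.sum_sub_distrib] at h2
      have h3 : ∑ i ∈ t, w i * (‖xs - a₀.2‖ * ‖u i‖) = ‖xs - a₀.2‖ * m := by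
        rw [hmdef, Finset.mul_sum]
        exact Finset.sum_congr rfl fun i hi => by ring
      have hJ : m ^ α ≤ ∑ i ∈ t, w i * ‖u i‖ ^ α :=
        Real.rpow_arith_mean_le_arith_mean_rpow t w (fun i => ‖u i‖) hw hw1
          (fun i hi => norm_nonneg _) hα.le
      have h4 : δ * m ^ α ≤ ∑ i ∈ t, w i * (δ * ‖u i‖ ^ α) := by
        have : ∑ i ∈ t, w i * (δ * ‖u i‖ ^ α) = δ * ∑ i ∈ t, w i * ‖u i‖ ^ α := by
          rw [Finset.mul_sum]; exact Finset.sum_congr rfl fun i hi => by ring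
        rw [this]
        exact mul_le_mul_of_nonneg_left hJ hδ.le
      rw [h3] at h2
      linarith
    rcases le_or_gt m m₀ with hc | hc
    · have := mul_le_mul_of_nonneg_left hc (norm_nonneg v)
      calc G ≤ ‖v‖ * m := boundB
        _ ≤ ‖v‖ * m₀ := this
        _ = m₀ * ‖v‖ := by ring
    · have hmpos : 0 < m := lt_of_le_of_lt hm₀0 hc
      have h1 : m₀ ^ (α - 1) ≤ m ^ (α - 1) :=
        Real.rpow_le_rpow hm₀0 hc.le (by linarith)
      have h2 : m₀ ^ (α - 1) = ‖xs - a₀.2‖ / δ := by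
        rw [hm₀def]
        exact Real.rpow_inv_rpow (div_nonneg (norm_nonneg _) hδ.le)
          (sub_ne_zero.mpr (ne_of_gt hα))
      have h3 : m ^ α = m ^ (α - 1) * m := by
        rw [← Real.rpow_add_one hmpos.ne' (α - 1)]
        congr 1
        ring
      have h4 : ‖xs - a₀.2‖ / δ ≤ m ^ (α - 1) := h2 ▸ h1
      have h5 : ‖xs - a₀.2‖ * m ≤ δ * m ^ α := by
        calc ‖xs - a₀.2‖ * m = δ * (‖xs - a₀.2‖ / δ) * m := by field_simp
          _ ≤ δ * m ^ (α - 1) * m := by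
              refine mul_le_mul_of_nonneg_right ?_ hm0
              exact mul_le_mul_of_nonneg_left h4 hδ.le
          _ = δ * m ^ α := by rw [h3]; ring
      have h6 : G ≤ 0 := by linarith
      exact h6.trans (mul_nonneg hm₀0 (norm_nonneg _))
  linarith

set_option maxHeartbeats 1000000 in
theorem stmt8 [CompleteSpace X] (A : Set (X × StrongDual ℝ X)) (hne : A.Nonempty)
    (hmono : IsMonotoneOp A) (δ α : ℝ) (hδ : 0 < δ) (hα : 1 < α)
    (hstrong : ∀ p ∈ A, ∀ q ∈ A, δ * ‖p.1 - q.1‖ ^ α ≤ (p.2 - q.2) (p.1 - q.1)) :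
    IsUltraMaxMonotone A ↔ ranOp A = Set.univ := by
  constructor
  · -- ultramaximal ⇒ surjective
    intro hU
    apply Set.eq_univ_of_forall
    intro xs
    obtain ⟨a₀, ha₀⟩ := hne
    set m₀ := (‖xs - a₀.2‖ / δ) ^ (α - 1)⁻¹ with hm₀def
    have hm₀0 : 0 ≤ m₀ := Real.rpow_nonneg (div_nonneg (norm_nonneg _) hδ.le) _
    set Cs : Set (StrongDual ℝ X × ℝ) :=
      (fun p : X × StrongDual ℝ X => ((xs - p.2 : StrongDual ℝ X), ((xs - p.2) p.1 : ℝ))) '' A with hCs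
    set O : Set (StrongDual ℝ X × ℝ) := {p | p.1 a₀.1 + m₀ * ‖p.1‖ < p.2} with hO
    have hOopen : IsOpen O := by
      have hf : Continuous fun p : StrongDual ℝ X × ℝ => p.1 a₀.1 + m₀ * ‖p.1‖ := by
        apply Continuous.add
        · exact (inclusionInDoubleDual ℝ X a₀.1).continuous.comp continuous_fst
        · exact continuous_const.mul continuous_fst.norm
      exact isOpen_lt hf continuous_snd
    have hOconv : Convex ℝ O := by
      rintro p hp q hq a b ha hb hab
      simp only [hO, Set.mem_setOf_eq] at hp hq ⊢
      have hfst : (a • p + b • q).1 = a • p.1 + b • q.1 := rfl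
      have hsnd : (a • p + b • q).2 = a * p.2 + b * q.2 := rfl
      have hn : ‖(a • p + b • q).1‖ ≤ a * ‖p.1‖ + b * ‖q.1‖ := by
        rw [hfst]
        calc ‖a • p.1 + b • q.1‖ ≤ ‖a • p.1‖ + ‖b • q.1‖ := norm_add_le _ _
          _ = a * ‖p.1‖ + b * ‖q.1‖ := by
            rw [norm_smul, norm_smul, Real.norm_eq_abs, Real.norm_eq_abs,
              abs_of_nonneg ha, abs_of_nonneg hb]
      have happ : (a • p + b • q).1 a₀.1 = a * (p.1 a₀.1) + b * (q.1 a₀.1) := by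
        rw [hfst]
        simp [ContinuousLinearMap.add_apply, ContinuousLinearMap.smul_apply, smul_eq_mul]
      have key : a * (p.1 a₀.1 + m₀ * ‖p.1‖) + b * (q.1 a₀.1 + m₀ * ‖q.1‖)
          < a * p.2 + b * q.2 := by
        rcases eq_or_lt_of_le ha with h0 | hapos
        · have hb1 : b = 1 := by linarith
          rw [← h0, hb1]; simpa using hq
        · have h1 : a * (p.1 a₀.1 + m₀ * ‖p.1‖) < a * p.2 :=
            mul_lt_mul_of_pos_left hp hapos
          have h2 : b * (q.1 a₀.1 + m₀ * ‖q.1‖) ≤ b * q.2 :=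
            mul_le_mul_of_nonneg_left hq.le hb
          linarith
      have hmn : m₀ * ‖(a • p + b • q).1‖ ≤ a * (m₀ * ‖p.1‖) + b * (m₀ * ‖q.1‖) := by
        have := mul_le_mul_of_nonneg_left hn hm₀0
        nlinarith
      rw [hsnd, happ]
      linarith
    have hdisj : Disjoint O (convexHull ℝ Cs) := by
      rw [Set.disjoint_left]
      rintro p hpO hpC
      rw [convexHull_eq] at hpC
      obtain ⟨ι, t, w, z, hw, hw1, hz, hcm⟩ := hpC
      have hch : ∀ i, ∃ q : X × StrongDual ℝ X, q ∈ A ∧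
          (i ∈ t → ((xs - q.2 : StrongDual ℝ X), ((xs - q.2) q.1 : ℝ)) = z i) := by
        intro i
        by_cases hi : i ∈ t
        · obtain ⟨q, hq, hqe⟩ := hz i hi
          exact ⟨q, hq, fun _ => hqe⟩
        · exact ⟨a₀, ha₀, fun h => absurd h hi⟩
      choose g hg1 hg2 using hch
      rw [Finset.centerMass_eq_of_sum_1 _ _ hw1] at hcm
      have hsum : ∑ i ∈ t, w i • z i
          = ∑ i ∈ t, w i • ((xs - (g i).2 : StrongDual ℝ X), ((xs - (g i).2) ((g i).1) : ℝ)) :=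
        Finset.sum_congr rfl fun i hi => by rw [← hg2 i hi]
      have hp1 : p.1 = xs - ∑ i ∈ t, w i • (g i).2 := by
        have e1 : p.1 = ∑ i ∈ t, w i • (xs - (g i).2) := by
          rw [← hcm, hsum, Prod.fst_sum]
          exact Finset.sum_congr rfl fun i _ => rfl
        rw [e1, Finset.sum_congr rfl fun i (hi : i ∈ t) => smul_sub (w i) xs ((g i).2),
          Finset.sum_sub_distrib, ← Finset.sum_smul, hw1, one_smul]
      have hp2 : p.2 = ∑ i ∈ t, w i * ((xs - (g i).2) ((g i).1)) := by
        have e1 : p.2 = ∑ i ∈ t, w i • ((xs - (g i).2) ((g i).1)) := by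
          rw [← hcm, hsum, Prod.snd_sum]
          exact Finset.sum_congr rfl fun i _ => rfl
        rw [e1]
        exact Finset.sum_congr rfl fun i hi => by rw [smul_eq_mul]
      have hest := combo_est A hmono hδ hα hstrong a₀ ha₀ xs t w g hw hw1
        (fun i _ => hg1 i)
      rw [← hm₀def] at hest
      simp only [hO, Set.mem_setOf_eq] at hpO
      rw [hp1, hp2] at hpO
      linarith
    obtain ⟨f, u, hfO, hfC⟩ :=
      geometric_hahn_banach_open hOconv hOopen (convex_convexHull ℝ Cs) hdisj
    set c := f ((0 : StrongDual ℝ X), (1 : ℝ)) with hc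
    have hsplit : ∀ (v : StrongDual ℝ X) (s : ℝ), f (v, s) = f (v, 0) + s * c := by
      intro v s
      have h1 : ((v, s) : StrongDual ℝ X × ℝ) = (v, (0 : ℝ)) + s • ((0 : StrongDual ℝ X), (1 : ℝ)) := by
        simp [Prod.ext_iff]
      rw [h1, map_add, map_smul, smul_eq_mul, hc]
    have hf00 : f ((0 : StrongDual ℝ X), (0 : ℝ)) = 0 := by
      rw [Prod.mk_zero_zero, map_zero]
    have hOmem : ∀ (v : StrongDual ℝ X) (s : ℝ), v a₀.1 + m₀ * ‖v‖ < s → f (v, 0) + s * c < u := by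
      intro v s h
      have hm : ((v, s) : StrongDual ℝ X × ℝ) ∈ O := by
        simp only [hO, Set.mem_setOf_eq]; exact h
      have := hfO (v, s) hm
      rwa [hsplit] at this
    have hc0 : c ≤ 0 := by
      by_contra h
      push_neg at h
      set s := max 1 ((|u| + 1) / c) with hs
      have hs1 : (0 : ℝ) < s := lt_of_lt_of_le zero_lt_one (le_max_left _ _)
      have hmem : (0 : StrongDual ℝ X) a₀.1 + m₀ * ‖(0 : StrongDual ℝ X)‖ < s := by
        simpa using hs1
      have h1 := hOmem 0 s hmem
      rw [hf00, zero_add] at h1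
      have h2 : (|u| + 1) / c * c ≤ s * c :=
        mul_le_mul_of_nonneg_right (le_max_right _ _) h.le
      rw [div_mul_cancel₀ _ h.ne'] at h2
      have := le_abs_self u
      linarith
    have hcne : c ≠ 0 := by
      intro hceq
      have hgu : ∀ v : StrongDual ℝ X, f (v, 0) < u := by
        intro v
        have := hOmem v (v a₀.1 + m₀ * ‖v‖ + 1) (by linarith)
        rwa [hceq, mul_zero, add_zero] at this
      have hg0 : ∀ v : StrongDual ℝ X, f (v, 0) ≤ 0 := by
        intro v
        by_contra h
        push_neg at h
        set s := max 1 ((|u| + 1) / f (v, 0)) with hs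
        have hsm : f (s • v, 0) = s * f (v, 0) := by
          rw [show ((s • v : StrongDual ℝ X), (0 : ℝ)) = s • (v, (0 : ℝ)) by simp [Prod.ext_iff],
            map_smul, smul_eq_mul]
        have h2 := hgu (s • v)
        rw [hsm] at h2
        have h3 : (|u| + 1) / f (v, 0) * f (v, 0) ≤ s * f (v, 0) :=
          mul_le_mul_of_nonneg_right (le_max_right _ _) h.le
        rw [div_mul_cancel₀ _ h.ne'] at h3
        have := le_abs_self u
        linarith
      have hgzero : ∀ v : StrongDual ℝ X, f (v, 0) = 0 := by
        intro v
        refine le_antisymm (hg0 v) ?_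
        have h1 := hg0 (-v)
        rw [show ((-v : StrongDual ℝ X), (0 : ℝ)) = -((v : StrongDual ℝ X), (0 : ℝ)) by simp [Prod.ext_iff],
          map_neg] at h1
        linarith
      have hb : ((xs - a₀.2 : StrongDual ℝ X), ((xs - a₀.2) a₀.1 : ℝ)) ∈ Cs := ⟨a₀, ha₀, rfl⟩
      have h1 : u ≤ 0 := by
        have h2 := hfC _ (subset_convexHull ℝ Cs hb)
        rwa [hsplit _ _, hceq, mul_zero, add_zero, hgzero] at h2
      have h2 : (0 : ℝ) < u := by
        have hmem : (0 : StrongDual ℝ X) a₀.1 + m₀ * ‖(0 : StrongDual ℝ X)‖ < 1 := by simp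
        have := hOmem 0 1 hmem
        rwa [hgzero, hceq, mul_zero, zero_add] at this
      linarith
    have hcneg : c < 0 := lt_of_le_of_ne hc0 hcne
    have hnc : (0 : ℝ) < -c := by linarith
    have hu0 : 0 ≤ u := by
      by_contra h
      push_neg at h
      have hεpos : 0 < u / (2 * c) := div_pos_of_neg_of_neg h (by linarith)
      have hmem : (0 : StrongDual ℝ X) a₀.1 + m₀ * ‖(0 : StrongDual ℝ X)‖ < u / (2 * c) := by
        simpa using hεpos
      have h1 := hOmem 0 (u / (2 * c)) hmem
      rw [hf00, zero_add] at h1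
      have h2 : u / (2 * c) * c = u / 2 := by
        field_simp
      rw [h2] at h1
      linarith
    set xss : StrongDual ℝ (StrongDual ℝ X) :=
      (-c)⁻¹ • (f.comp (ContinuousLinearMap.inl ℝ (StrongDual ℝ X) ℝ)) with hxss
    have hkey : ∀ p ∈ A, 0 ≤ (xss - inclusionInDoubleDual ℝ X p.1) (xs - p.2) := by
      intro p hp
      have hmem : ((xs - p.2 : StrongDual ℝ X), ((xs - p.2) p.1 : ℝ)) ∈ Cs := ⟨p, hp, rfl⟩
      have h1 := hfC _ (subset_convexHull ℝ Cs hmem)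
      rw [hsplit _ _] at h1
      have h3 : (xs - p.2) p.1 ≤ (-c)⁻¹ * f ((xs - p.2 : StrongDual ℝ X), (0 : ℝ)) := by
        rw [inv_mul_eq_div, le_div_iff₀ hnc]
        nlinarith
      have h4 : xss (xs - p.2) = (-c)⁻¹ * f ((xs - p.2 : StrongDual ℝ X), (0 : ℝ)) := by
        rw [hxss]
        simp [ContinuousLinearMap.smul_apply, ContinuousLinearMap.comp_apply,
          ContinuousLinearMap.inl_apply, smul_eq_mul]
      rw [ContinuousLinearMap.sub_apply, h4, dual_def]
      linarith
    obtain ⟨x, hx1, hx2⟩ := hU.2 xss xs hkey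
    exact ⟨x, hx2⟩
  · -- surjective ⇒ ultramaximal
    intro hran
    refine ⟨hmono, fun xss xs hrel => ?_⟩
    have hxs : xs ∈ ranOp A := Set.eq_univ_iff_forall.mp hran _
    obtain ⟨a, ha⟩ := hxs
    refine ⟨a, ?_, ha⟩
    have main : ∀ w : StrongDual ℝ X, 0 ≤ (xss - inclusionInDoubleDual ℝ X a) w := by
      intro w
      by_cases hw0 : w = 0
      · simp [hw0]
      have hnw : 0 < ‖w‖ := norm_pos_iff.mpr hw0
      by_contra hneg
      push_neg at hneg
      set ε := -((xss - inclusionInDoubleDual ℝ X a) w) / 2 with hε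
      have hεpos : 0 < ε := by rw [hε]; linarith
      set s := δ * (ε / ‖w‖) ^ (α - 1) / ‖w‖ with hs
      have hspos : 0 < s := by
        rw [hs]
        exact div_pos (mul_pos hδ (Real.rpow_pos_of_pos (div_pos hεpos hnw) _)) hnw
      obtain ⟨b, hb⟩ : (xs - s • w) ∈ ranOp A := Set.eq_univ_iff_forall.mp hran _
      have h1 : 0 ≤ (xss - inclusionInDoubleDual ℝ X b) (s • w) := by
        have := hrel (b, xs - s • w) hb
        simpa [sub_sub_cancel] using this
      have h2 : 0 ≤ (xss - inclusionInDoubleDual ℝ X b) w := by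
        rw [map_smul, smul_eq_mul] at h1
        by_contra hn
        push_neg at hn
        nlinarith
      have h3 : w b - w a ≤ (xss - inclusionInDoubleDual ℝ X a) w := by
        have e : (xss - inclusionInDoubleDual ℝ X a) w
            = (xss - inclusionInDoubleDual ℝ X b) w + (w b - w a) := by
          simp only [ContinuousLinearMap.sub_apply, dual_def]
          ring
        rw [e]; linarith
      have h4 := hstrong (a, xs) ha (b, xs - s • w) hb
      have h4' : δ * ‖a - b‖ ^ α ≤ s * w (a - b) := by
        have e1 : xs - (xs - s • w) = s • w := sub_sub_cancel _ _
        have e2 : ((a, xs).2 - (b, xs - s • w).2) ((a, xs).1 - (b, xs - s • w).1)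
            = s * w (a - b) := by
          show (xs - (xs - s • w)) (a - b) = s * w (a - b)
          rw [e1, ContinuousLinearMap.smul_apply, smul_eq_mul]
        rw [e2] at h4
        exact h4
      have h5 : ‖a - b‖ ≤ ε / ‖w‖ := by
        rcases eq_or_ne a b with he | hne
        · rw [he, sub_self, norm_zero]
          positivity
        · have hab : 0 < ‖a - b‖ := by
            rw [norm_pos_iff]
            exact sub_ne_zero.mpr hne
          have h6 : w (a - b) ≤ ‖w‖ * ‖a - b‖ := by
            refine le_trans (le_abs_self _) ?_
            simpa [Real.norm_eq_abs] using w.le_opNorm (a - b)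
          have h7 : δ * ‖a - b‖ ^ α ≤ s * (‖w‖ * ‖a - b‖) :=
            h4'.trans (mul_le_mul_of_nonneg_left h6 hspos.le)
          have h8 : ‖a - b‖ ^ α = ‖a - b‖ ^ (α - 1) * ‖a - b‖ := by
            rw [← Real.rpow_add_one hab.ne' (α - 1)]
            congr 1
            ring
          have h7' : (δ * ‖a - b‖ ^ (α - 1)) * ‖a - b‖ ≤ (s * ‖w‖) * ‖a - b‖ := by
            rw [mul_assoc, mul_assoc, ← h8]
            exact h7
          have h9 : δ * ‖a - b‖ ^ (α - 1) ≤ s * ‖w‖ := le_of_mul_le_mul_right h7' hab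
          have htw : s * ‖w‖ = δ * (ε / ‖w‖) ^ (α - 1) := by
            rw [hs]
            field_simp
          rw [htw] at h9
          have h10 : ‖a - b‖ ^ (α - 1) ≤ (ε / ‖w‖) ^ (α - 1) :=
            (mul_le_mul_iff_of_pos_left hδ).mp h9
          exact (Real.rpow_le_rpow_iff (norm_nonneg _) (by positivity)
            (by linarith : (0 : ℝ) < α - 1)).mp h10
      have habs : |w (a - b)| ≤ ‖w‖ * ‖a - b‖ := by
        simpa [Real.norm_eq_abs] using w.le_opNorm (a - b)
      have hwsub : w (a - b) = w a - w b := map_sub w a b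
      have h13 : ‖w‖ * ‖a - b‖ ≤ ‖w‖ * (ε / ‖w‖) :=
        mul_le_mul_of_nonneg_left h5 (norm_nonneg w)
      have h14 : ‖w‖ * (ε / ‖w‖) = ε := by field_simp
      have h15 : -ε ≤ (xss - inclusionInDoubleDual ℝ X a) w := by
        have h16 := neg_abs_le (w b - w a)
        rw [abs_sub_comm] at h16
        rw [hwsub] at habs
        linarith
      rw [hε] at h15
      linarith
    have hzero : ∀ w : StrongDual ℝ X, (xss - inclusionInDoubleDual ℝ X a) w = 0 := by
      intro w
      have h1 := main w
      have h2 := main (-w)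
      rw [map_neg] at h2
      linarith
    apply ContinuousLinearMap.ext
    intro w
    have := hzero w
    rw [ContinuousLinearMap.sub_apply] at this
    linarith
end
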